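/- arXiv:1008.1894 — 4 statements merged into one kernel-verified Lean document; each statement's English description precedes it below -/
import Mathlib

section
/- For every k ∈ ℕ with k ≥ 1 and every h ∈ ℂ with Re(h) > 1, the defining series of L_q^h(s, χ) converge at s = 1 − k and L_q^h(1−k, χ) = − β_{k,χ,q}^h / k. -/
open Complex Finset Filter

/-- Complex power `q^z := exp(z·log q)` for a real base `q`. -/
noncomputable def qcpow (q : ℝ) (z : ℂ) : ℂ := Complex.exp (z * (Real.log q : ℂ))

/-- The complex `q`-number `[z]_q = (1 - q^z)/(1 - q)`. -/
noncomputable def qnum (q : ℝ) (z : ℂ) : ℂ := (1 - qcpow q z) / (1 - (q : ℂ))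

/-- The real `q`-number `[y]_q = (1 - q^y)/(1 - q)` for real `y`. -/
noncomputable def qnumR (q : ℝ) (y : ℝ) : ℝ := (1 - Real.exp (y * Real.log q)) / (1 - q)

/-- The `(h,q)`-Bernoulli polynomial
`β_{n,q}^h(x) = (1-q)^{-n} ∑_{l=0}^{n} C(n,l) (-1)^l q^{lx} (l+h-1)/[l+h-1]_q`. -/
noncomputable def qbeta (q : ℝ) (h : ℂ) (n : ℕ) (x : ℝ) : ℂ :=
  (1 - (q : ℂ))⁻¹ ^ n * ∑ l ∈ Finset.range (n + 1),
    (n.choose l : ℂ) * (-1) ^ l * qcpow q ((l : ℂ) * (x : ℂ)) *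
      (((l : ℂ) + h - 1) / qnum q ((l : ℂ) + h - 1))

/-- The generalized `(h,q)`-Bernoulli polynomial attached to a Dirichlet character `χ` mod `f`:
`β_{n,χ,q}^h(x) = [f]_q^{n-1} ∑_{a=0}^{f-1} χ(a) q^{(h-1)a} β_{n,q^f}^h((x+a)/f)`. -/
noncomputable def qbetaChi (q : ℝ) (h : ℂ) (f : ℕ) (χ : DirichletCharacter ℂ f)
    (n : ℕ) (x : ℝ) : ℂ :=
  qnum q (f : ℂ) ^ ((n : ℤ) - 1) * ∑ a ∈ Finset.range f,
    χ (a : ZMod f) * qcpow q ((h - 1) * (a : ℂ)) * qbeta (q ^ f) h n ((x + a) / f)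

/-- The Hurwitz-type `(h,q)`-`L`-function
`L_q^h(s, χ | x) = ((h-1)(1-q)/(s-1)) ∑ q^{(h-1)m} χ(m)/[x+m]_q^{s-1}
  + ∑ q^{hm+x} χ(m)/[x+m]_q^s`. -/
noncomputable def hqLH (q : ℝ) (h s : ℂ) (f : ℕ) (χ : DirichletCharacter ℂ f) (x : ℝ) : ℂ :=
  ((h - 1) * (1 - (q : ℂ)) / (s - 1)) *
    (∑' m : ℕ, qcpow q ((h - 1) * (m : ℂ)) * χ (m : ZMod f) /
      Complex.exp ((s - 1) * (Real.log (qnumR q (x + m)) : ℂ))) +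
  ∑' m : ℕ, qcpow q (h * (m : ℂ) + (x : ℂ)) * χ (m : ZMod f) /
    Complex.exp (s * (Real.log (qnumR q (x + m)) : ℂ))

/-- The Dirichlet-type `(h,q)`-`L`-function
`L_q^h(s, χ) = ((h-1)(1-q)/(s-1)) ∑_{m≥1} q^{(h-1)m} χ(m)/[m]_q^{s-1}
  + ∑_{m≥1} q^{hm} χ(m)/[m]_q^s`. -/
noncomputable def hqL (q : ℝ) (h s : ℂ) (f : ℕ) (χ : DirichletCharacter ℂ f) : ℂ :=
  ((h - 1) * (1 - (q : ℂ)) / (s - 1)) *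
    (∑' m : ℕ, qcpow q ((h - 1) * ((m : ℂ) + 1)) * χ ((m + 1 : ℕ) : ZMod f) /
      Complex.exp ((s - 1) * (Real.log (qnumR q ((m : ℝ) + 1)) : ℂ))) +
  ∑' m : ℕ, qcpow q (h * ((m : ℂ) + 1)) * χ ((m + 1 : ℕ) : ZMod f) /
    Complex.exp (s * (Real.log (qnumR q ((m : ℝ) + 1)) : ℂ))


/-! ### Auxiliary lemmas -/

lemma qcpow_add (q : ℝ) (z w : ℂ) : qcpow q (z + w) = qcpow q z * qcpow q w := by
  rw [qcpow, qcpow, qcpow, add_mul, Complex.exp_add]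

lemma qcpow_nat_mul (q : ℝ) (z : ℂ) (n : ℕ) : qcpow q (z * n) = qcpow q z ^ n := by
  rw [qcpow, qcpow, mul_comm z (n:ℂ), mul_assoc, Complex.exp_nat_mul]

lemma qcpow_natCast {q : ℝ} (hq0 : 0 < q) (n : ℕ) : qcpow q (n : ℂ) = (q:ℂ) ^ n := by
  rw [qcpow, show ((n:ℂ) * ((Real.log q : ℝ):ℂ)) = (((n * Real.log q : ℝ)):ℂ) by push_cast; ring,
    ← Complex.ofReal_exp, Real.exp_nat_mul, Real.exp_log hq0]
  push_cast; ring

lemma qcpow_pow_base (q : ℝ) (f : ℕ) (z : ℂ) : qcpow (q ^ f) z = qcpow q (z * f) := by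
  rw [qcpow, qcpow, Real.log_pow]
  push_cast; ring_nf

lemma qcpow_merge (q : ℝ) (z w : ℂ) (a : ℕ) :
    qcpow q (z * a) * qcpow q (w * a) = qcpow q (z + w) ^ a := by
  rw [← qcpow_add, ← qcpow_nat_mul]; congr 1; ring

lemma norm_qcpow (q : ℝ) (z : ℂ) : ‖qcpow q z‖ = Real.exp (z.re * Real.log q) := by
  rw [qcpow, Complex.norm_exp]
  congr 1
  simp [Complex.mul_re]

lemma norm_qcpow_lt_one {q : ℝ} (hq0 : 0 < q) (hq1 : q < 1) {z : ℂ} (hz : 0 < z.re) :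
    ‖qcpow q z‖ < 1 := by
  rw [norm_qcpow]
  have h1 : z.re * Real.log q < 0 := mul_neg_of_pos_of_neg hz (Real.log_neg hq0 hq1)
  have := Real.exp_lt_exp.2 h1
  rwa [Real.exp_zero] at this

lemma char_summable (f : ℕ) (χ : DirichletCharacter ℂ f) {x : ℂ} (hx : ‖x‖ < 1) :
    Summable (fun m : ℕ => χ (m : ZMod f) * x ^ m) := by
  apply Summable.of_norm_bounded (g := fun m => ‖x‖ ^ m)
    (summable_geometric_of_lt_one (norm_nonneg x) hx)
  intro m
  rw [norm_mul, norm_pow]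
  exact mul_le_of_le_one_left (by positivity) (DirichletCharacter.norm_le_one χ _)

lemma char_tsum (f : ℕ) [NeZero f] (χ : DirichletCharacter ℂ f) {x : ℂ} (hx : ‖x‖ < 1) :
    ∑' m : ℕ, χ (m : ZMod f) * x ^ m
      = (∑ a ∈ Finset.range f, χ (a : ZMod f) * x ^ a) * (1 - x ^ f)⁻¹ := by
  have hsum := char_summable f χ hx
  have hxf : ‖x ^ f‖ < 1 := by
    rw [norm_pow]; exact pow_lt_one₀ (norm_nonneg x) hx (NeZero.ne f)
  set e := (Nat.divModEquiv f).symm with he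
  have key : ∀ p : ℕ × Fin f,
      χ (((e p : ℕ)) : ZMod f) * x ^ (e p : ℕ)
        = χ (((p.2 : ℕ)) : ZMod f) * x ^ (p.2 : ℕ) * (x ^ f) ^ p.1 := by
    intro p
    have h1 : (e p : ℕ) = (p.2 : ℕ) + f * p.1 := by
      simp [he, Nat.divModEquiv]; ring
    have h2 : (((p.2 : ℕ) + f * p.1 : ℕ) : ZMod f) = (((p.2 : ℕ)) : ZMod f) := by
      push_cast; simp [ZMod.natCast_self]
    rw [h1, h2, pow_add, pow_mul]
    ring
  have hs2 : Summable (fun p : ℕ × Fin f =>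
      χ (((p.2 : ℕ)) : ZMod f) * x ^ (p.2 : ℕ) * (x ^ f) ^ p.1) := by
    have := (e.summable_iff (f := fun m : ℕ => χ (m : ZMod f) * x ^ m)).2 hsum
    exact this.congr (fun p => key p)
  have h3 : ∑' m : ℕ, χ (m : ZMod f) * x ^ m
      = ∑' p : ℕ × Fin f, χ (((p.2 : ℕ)) : ZMod f) * x ^ (p.2 : ℕ) * (x ^ f) ^ p.1 := by
    rw [← e.tsum_eq (fun m : ℕ => χ (m : ZMod f) * x ^ m)]
    exact tsum_congr key
  rw [h3, Summable.tsum_prod hs2]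
  have h4 : ∀ t : ℕ, ∑' a : Fin f, χ (((a : ℕ)) : ZMod f) * x ^ (a : ℕ) * (x ^ f) ^ t
      = (∑ a ∈ Finset.range f, χ (a : ZMod f) * x ^ a) * (x ^ f) ^ t := by
    intro t
    rw [tsum_fintype, ← Finset.sum_mul,
      Fin.sum_univ_eq_sum_range (fun a => χ (a : ZMod f) * x ^ a) f]
  rw [tsum_congr h4, tsum_mul_left, tsum_geometric_of_norm_lt_one hxf, mul_comm]

lemma char_shift (f : ℕ) [NeZero f] (χ : DirichletCharacter ℂ f)
    (hχ0 : χ (0 : ZMod f) = 0) {x : ℂ} (hx : ‖x‖ < 1) :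
    Summable (fun m : ℕ => χ ((m + 1 : ℕ) : ZMod f) * x ^ (m + 1)) ∧
    ∑' m : ℕ, χ ((m + 1 : ℕ) : ZMod f) * x ^ (m + 1)
      = (∑ a ∈ Finset.range f, χ (a : ZMod f) * x ^ a) * (1 - x ^ f)⁻¹ := by
  have hsum := char_summable f χ hx
  constructor
  · exact hsum.comp_injective (add_left_injective 1)
  · have := Summable.tsum_eq_zero_add hsum
    rw [Nat.cast_zero, hχ0, zero_mul, zero_add] at this
    rw [← this, char_tsum f χ hx]

/-- The basic character sum building block `(∑_a χ(a) x^a)/(1-x^f)` with `x = q^z`. -/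
noncomputable def gaux (q : ℝ) (f : ℕ) (χ : DirichletCharacter ℂ f) (z : ℂ) : ℂ :=
  (∑ a ∈ Finset.range f, χ (a : ZMod f) * qcpow q z ^ a) * (1 - qcpow q z ^ f)⁻¹

lemma hqmaster {q : ℝ} (hq0 : 0 < q) (hq1 : q < 1) (f : ℕ) [NeZero f]
    (χ : DirichletCharacter ℂ f) (hχ0 : χ (0 : ZMod f) = 0)
    (w : ℂ) (hw : 0 < w.re) (n : ℕ) :
    Summable (fun m : ℕ => χ ((m + 1 : ℕ) : ZMod f) * qcpow q (w * ((m : ℂ) + 1)) *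
      (1 - (q : ℂ) ^ (m + 1)) ^ n) ∧
    ∑' m : ℕ, χ ((m + 1 : ℕ) : ZMod f) * qcpow q (w * ((m : ℂ) + 1)) *
        (1 - (q : ℂ) ^ (m + 1)) ^ n
      = ∑ l ∈ Finset.range (n + 1), (n.choose l : ℂ) * (-1) ^ l * gaux q f χ (w + (l : ℂ)) := by
  have hwl : ∀ l : ℕ, 0 < (w + (l : ℂ)).re := by
    intro l
    rw [Complex.add_re, Complex.natCast_re]
    positivity
  have hptw : ∀ m : ℕ, χ ((m + 1 : ℕ) : ZMod f) * qcpow q (w * ((m : ℂ) + 1)) *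
      (1 - (q : ℂ) ^ (m + 1)) ^ n
      = ∑ l ∈ Finset.range (n + 1), (n.choose l : ℂ) * (-1) ^ l *
          (χ ((m + 1 : ℕ) : ZMod f) * qcpow q (w + (l : ℂ)) ^ (m + 1)) := by
    intro m
    have hbin : (1 - (q : ℂ) ^ (m + 1)) ^ n
        = ∑ l ∈ Finset.range (n + 1), (n.choose l : ℂ) * (-1) ^ l * ((q : ℂ) ^ (m + 1)) ^ l := by
      rw [show (1 : ℂ) - (q : ℂ) ^ (m + 1) = -((q:ℂ) ^ (m + 1)) + 1 by ring,
        Commute.add_pow (Commute.all _ _) n]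
      refine Finset.sum_congr rfl fun l _ => ?_
      rw [neg_pow]
      ring
    have hx : ∀ l : ℕ, qcpow q (w + (l : ℂ)) ^ (m + 1)
        = qcpow q (w * ((m : ℂ) + 1)) * ((q : ℂ) ^ (m + 1)) ^ l := by
      intro l
      rw [show ((m:ℂ) + 1) = ((m + 1 : ℕ) : ℂ) by push_cast; ring,
        ← qcpow_nat_mul q (w + (l:ℂ)) (m + 1),
        show (w + (l:ℂ)) * ((m + 1 : ℕ) : ℂ)
          = w * ((m + 1 : ℕ) : ℂ) + ((m + 1 : ℕ) : ℂ) * (l : ℂ) by ring,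
        qcpow_add, qcpow_nat_mul q (((m + 1 : ℕ) : ℂ)) l, qcpow_natCast hq0]
    rw [hbin, Finset.mul_sum]
    refine Finset.sum_congr rfl fun l _ => ?_
    rw [hx l]
    ring
  have hsl : ∀ l ∈ Finset.range (n + 1), Summable (fun m : ℕ => (n.choose l : ℂ) * (-1) ^ l *
      (χ ((m + 1 : ℕ) : ZMod f) * qcpow q (w + (l : ℂ)) ^ (m + 1))) := by
    intro l _
    exact ((char_shift f χ hχ0 (norm_qcpow_lt_one hq0 hq1 (hwl l))).1).mul_left _
  constructor
  · exact (summable_sum hsl).congr fun m => (hptw m).symm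
  · rw [tsum_congr hptw, Summable.tsum_finsetSum hsl]
    refine Finset.sum_congr rfl fun l _ => ?_
    rw [tsum_mul_left, (char_shift f χ hχ0 (norm_qcpow_lt_one hq0 hq1 (hwl l))).2]
    rfl

lemma term_eq {q : ℝ} (hq0 : 0 < q) (hq1 : q < 1) (f : ℕ) (χ : DirichletCharacter ℂ f)
    (w : ℂ) (n : ℕ) (e : ℂ) (he : e = -(n : ℂ)) (m : ℕ) :
    qcpow q (w * ((m : ℂ) + 1)) * χ ((m + 1 : ℕ) : ZMod f) /
        Complex.exp (e * (Real.log (qnumR q ((m : ℝ) + 1)) : ℂ))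
    = (χ ((m + 1 : ℕ) : ZMod f) * qcpow q (w * ((m : ℂ) + 1)) * (1 - (q : ℂ) ^ (m + 1)) ^ n) *
        ((1 - (q : ℂ))⁻¹) ^ n := by
  subst he
  have hqm : q ^ (m + 1) < 1 := pow_lt_one₀ hq0.le hq1 (Nat.succ_ne_zero m)
  have hr : qnumR q ((m : ℝ) + 1) = (1 - q ^ (m + 1)) / (1 - q) := by
    rw [qnumR, show ((m : ℝ) + 1) = ((m + 1 : ℕ) : ℝ) by push_cast; ring,
      Real.exp_nat_mul, Real.exp_log hq0]
  have hrpos : 0 < qnumR q ((m : ℝ) + 1) := by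
    rw [hr]
    have h1 : (0:ℝ) < 1 - q := by linarith
    have h2 : (0:ℝ) < 1 - q ^ (m+1) := by linarith
    positivity
  have hexp : Complex.exp (-(n : ℂ) * (Real.log (qnumR q ((m : ℝ) + 1)) : ℂ))
      = (((1 - q ^ (m + 1)) ^ n / (1 - q) ^ n : ℝ) : ℂ)⁻¹ := by
    rw [show -(n : ℂ) * (Real.log (qnumR q ((m : ℝ) + 1)) : ℂ)
        = -((n : ℂ) * (Real.log (qnumR q ((m : ℝ) + 1)) : ℂ)) by ring, Complex.exp_neg]
    congr 1
    rw [show (n : ℂ) * ((Real.log (qnumR q ((m : ℝ) + 1)) : ℝ) : ℂ)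
        = (((n : ℝ) * Real.log (qnumR q ((m : ℝ) + 1)) : ℝ) : ℂ) by push_cast; ring,
      ← Complex.ofReal_exp, Real.exp_nat_mul, Real.exp_log hrpos, hr, div_pow]
  rw [hexp]
  have hcast : (((1 - q ^ (m + 1)) ^ n / (1 - q) ^ n : ℝ) : ℂ)
      = (1 - (q : ℂ) ^ (m + 1)) ^ n / (1 - (q : ℂ)) ^ n := by
    push_cast; ring
  rw [hcast, inv_div, div_div_eq_mul_div, div_eq_mul_inv, inv_pow]
  ring

lemma qbetaChi_eq {q : ℝ} (hq0 : 0 < q) (hq1 : q < 1) (h : ℂ) (f : ℕ) (hf : 1 ≤ f)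
    (χ : DirichletCharacter ℂ f) (j : ℕ) :
    qbetaChi q h f χ (j + 1) 0 = ((1 - (q : ℂ))⁻¹) ^ j * ∑ l ∈ Finset.range (j + 2),
      ((j + 1).choose l : ℂ) * (-1) ^ l * (((l : ℂ) + h - 1) * gaux q f χ (h - 1 + (l : ℂ))) := by
  have hfC : (f : ℂ) ≠ 0 := Nat.cast_ne_zero.2 (by omega)
  have hqf : q ^ f < 1 := pow_lt_one₀ hq0.le hq1 (by omega)
  have hW : (1 : ℂ) - (q : ℂ) ^ f ≠ 0 := by
    rw [show (1 : ℂ) - (q : ℂ) ^ f = (((1 - q ^ f : ℝ)) : ℂ) by push_cast; ring]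
    exact_mod_cast (by linarith : (1:ℝ) - q ^ f ≠ 0)
  have hu : (1 : ℂ) - (q : ℂ) ≠ 0 := by
    rw [show (1 : ℂ) - (q : ℂ) = (((1 - q : ℝ)) : ℂ) by push_cast; ring]
    exact_mod_cast (by linarith : (1:ℝ) - q ≠ 0)
  have hbeta : ∀ a : ℕ, qbeta (q ^ f) h (j + 1) ((0 + (a : ℝ)) / f)
      = ((1 - (q : ℂ) ^ f)⁻¹) ^ (j + 1) * ∑ l ∈ Finset.range (j + 2),
          ((j + 1).choose l : ℂ) * (-1) ^ l * qcpow q ((l : ℂ) * (a : ℂ)) *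
            (((l : ℂ) + h - 1) * ((1 - (q : ℂ) ^ f) *
              (1 - qcpow q (h - 1 + (l : ℂ)) ^ f)⁻¹)) := by
    intro a
    rw [qbeta]
    congr 1
    · push_cast; ring
    refine Finset.sum_congr rfl fun l _ => ?_
    have h1 : qcpow (q ^ f) ((l : ℂ) * ((((0:ℝ) + (a:ℝ)) / f : ℝ) : ℂ))
        = qcpow q ((l : ℂ) * (a : ℂ)) := by
      rw [qcpow_pow_base]
      congr 1
      push_cast
      field_simp
      ring
    have h2 : qnum (q ^ f) ((l : ℂ) + h - 1)
        = (1 - qcpow q (h - 1 + (l : ℂ)) ^ f) / (1 - (q : ℂ) ^ f) := by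
      rw [qnum, qcpow_pow_base,
        show ((l:ℂ) + h - 1) * (f : ℂ) = (h - 1 + (l:ℂ)) * (f : ℂ) by ring, qcpow_nat_mul]
      push_cast
      ring
    rw [h1, h2, div_div_eq_mul_div, div_eq_mul_inv]
    ring
  have hzpow : qnum q (f : ℂ) ^ (((j + 1 : ℕ) : ℤ) - 1)
      = ((1 - (q : ℂ) ^ f) * (1 - (q : ℂ))⁻¹) ^ j := by
    rw [show (((j + 1 : ℕ) : ℤ) - 1) = ((j : ℕ) : ℤ) by push_cast; ring, zpow_natCast,
      qnum, qcpow_natCast hq0, div_eq_mul_inv]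
  rw [qbetaChi, hzpow]
  simp only [hbeta]
  simp only [Finset.mul_sum, Finset.sum_mul]
  rw [Finset.sum_comm]
  refine Finset.sum_congr rfl fun l _ => ?_
  rw [gaux]
  simp only [Finset.mul_sum, Finset.sum_mul]
  refine Finset.sum_congr rfl fun a _ => ?_
  have hm : χ (a : ZMod f) * qcpow q ((h - 1) * (a : ℂ)) * qcpow q ((l : ℂ) * (a : ℂ))
      = χ (a : ZMod f) * qcpow q (h - 1 + (l : ℂ)) ^ a := by
    rw [mul_assoc, qcpow_merge]
  have hS : ((1-(q:ℂ)^f) * (1-(q:ℂ))⁻¹)^j * ((1-(q:ℂ)^f)⁻¹)^(j+1) * (1-(q:ℂ)^f)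
      = ((1-(q:ℂ))⁻¹)^j := by
    have h1 : (1-(q:ℂ)^f)^j * ((1-(q:ℂ)^f)⁻¹)^j = 1 := by
      rw [← mul_pow, mul_inv_cancel₀ hW, one_pow]
    have h2 : (1-(q:ℂ)^f)⁻¹ * (1-(q:ℂ)^f) = 1 := inv_mul_cancel₀ hW
    rw [mul_pow]
    linear_combination ((1-(q:ℂ))⁻¹)^j * ((1-(q:ℂ)^f)⁻¹ * (1-(q:ℂ)^f)) * h1
      + ((1-(q:ℂ))⁻¹)^j * h2
  linear_combination (χ (a : ZMod f) * qcpow q ((h-1)*(a:ℂ)) * qcpow q ((l:ℂ)*(a:ℂ)) *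
      (((j+1).choose l : ℂ) * (-1)^l * (((l:ℂ)+h-1) * (1 - qcpow q (h-1+(l:ℂ))^f)⁻¹))) * hS
    + (((1-(q:ℂ))⁻¹)^j *
      (((j+1).choose l : ℂ) * (-1)^l * (((l:ℂ)+h-1) * (1 - qcpow q (h-1+(l:ℂ))^f)⁻¹))) * hm

lemma reindex_lemma (j : ℕ) (h : ℂ) (g g' : ℕ → ℂ) (hgg : ∀ l, g' l = g (l + 1)) :
    ∑ l ∈ Finset.range (j + 1 + 1), ((j+1).choose l : ℂ) * (-1) ^ l * (((l:ℂ) + h - 1) * g l)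
    = (h - 1) * (∑ l ∈ Finset.range (j + 1 + 1), ((j+1).choose l : ℂ) * (-1) ^ l * g l)
      + (-((j:ℂ) + 1)) * (∑ l ∈ Finset.range (j + 1), (j.choose l : ℂ) * (-1) ^ l * g' l) := by
  rw [Finset.sum_range_succ'
      (fun l => ((j+1).choose l : ℂ) * (-1) ^ l * (((l:ℂ) + h - 1) * g l)) (j+1),
    Finset.sum_range_succ' (fun l => ((j+1).choose l : ℂ) * (-1) ^ l * g l) (j+1)]
  have hsum : ∑ l ∈ Finset.range (j + 1),
      ((j+1).choose (l+1) : ℂ) * (-1) ^ (l+1) * (((((l+1:ℕ)):ℂ) + h - 1) * g (l+1))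
      = ∑ l ∈ Finset.range (j + 1),
        ((h - 1) * (((j+1).choose (l+1) : ℂ) * (-1) ^ (l+1) * g (l+1))
          + (-((j:ℂ) + 1)) * ((j.choose l : ℂ) * (-1) ^ l * g' l)) := by
    refine Finset.sum_congr rfl fun l hl => ?_
    rw [hgg l]
    have hc := Nat.add_one_mul_choose_eq j l
    have hcC : (((j+1) * j.choose l : ℕ) : ℂ) = (((j+1).choose (l+1) * (l+1) : ℕ) : ℂ) := by
      exact_mod_cast congrArg (Nat.cast : ℕ → ℂ) hc
    push_cast at hcC ⊢
    linear_combination ((-1:ℂ)^l * g (l+1)) * hcC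
  rw [hsum, Finset.sum_add_distrib, ← Finset.mul_sum, ← Finset.mul_sum]
  push_cast
  ring

/-- for non-trivial `χ`, `L_q^h(1-k, χ) = -β_{k,χ,q}^h/k` for `k ≥ 1`,
with the defining series converging at `s = 1-k`. -/
theorem hqL_neg_nat (q : ℝ) (hq0 : 0 < q) (hq1 : q < 1)
    (h : ℂ) (hh : 1 < h.re) (f : ℕ) (hf : 1 ≤ f) (χ : DirichletCharacter ℂ f)
    (hχ : χ ≠ 1) (k : ℕ) (hk : 1 ≤ k) :
    Summable (fun m : ℕ => qcpow q ((h - 1) * ((m : ℂ) + 1)) * χ ((m + 1 : ℕ) : ZMod f) /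
      Complex.exp (((1 - (k : ℂ)) - 1) * (Real.log (qnumR q ((m : ℝ) + 1)) : ℂ))) ∧
    Summable (fun m : ℕ => qcpow q (h * ((m : ℂ) + 1)) * χ ((m + 1 : ℕ) : ZMod f) /
      Complex.exp ((1 - (k : ℂ)) * (Real.log (qnumR q ((m : ℝ) + 1)) : ℂ))) ∧
    hqL q h (1 - (k : ℂ)) f χ = -qbetaChi q h f χ k 0 / (k : ℂ) := by
  obtain ⟨j, rfl⟩ : ∃ j, k = j + 1 := ⟨k - 1, by omega⟩
  have hfne : f ≠ 1 := by
    rintro rfl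
    exact hχ (Subsingleton.elim χ 1)
  haveI : NeZero f := ⟨by omega⟩
  haveI : Fact (1 < f) := ⟨by omega⟩
  have hχ0 : χ (0 : ZMod f) = 0 := by
    apply χ.map_nonunit
    rw [isUnit_zero_iff]
    exact zero_ne_one
  have hw1 : (0:ℝ) < (h - 1).re := by
    rw [Complex.sub_re, Complex.one_re]; linarith
  have hwh : (0:ℝ) < h.re := by linarith
  have M1 := hqmaster hq0 hq1 f χ hχ0 (h - 1) hw1 (j + 1)
  have M2 := hqmaster hq0 hq1 f χ hχ0 h hwh j
  have e1 : ∀ m : ℕ, qcpow q ((h - 1) * ((m : ℂ) + 1)) * χ ((m + 1 : ℕ) : ZMod f) /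
      Complex.exp (((1 - ((j + 1 : ℕ) : ℂ)) - 1) * (Real.log (qnumR q ((m : ℝ) + 1)) : ℂ))
      = (χ ((m + 1 : ℕ) : ZMod f) * qcpow q ((h - 1) * ((m : ℂ) + 1)) *
          (1 - (q : ℂ) ^ (m + 1)) ^ (j + 1)) * ((1 - (q : ℂ))⁻¹) ^ (j + 1) :=
    term_eq hq0 hq1 f χ (h - 1) (j + 1) _ (by push_cast; ring)
  have e2 : ∀ m : ℕ, qcpow q (h * ((m : ℂ) + 1)) * χ ((m + 1 : ℕ) : ZMod f) /
      Complex.exp ((1 - ((j + 1 : ℕ) : ℂ)) * (Real.log (qnumR q ((m : ℝ) + 1)) : ℂ))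
      = (χ ((m + 1 : ℕ) : ZMod f) * qcpow q (h * ((m : ℂ) + 1)) *
          (1 - (q : ℂ) ^ (m + 1)) ^ j) * ((1 - (q : ℂ))⁻¹) ^ j :=
    term_eq hq0 hq1 f χ h j _ (by push_cast; ring)
  have S1 : Summable (fun m : ℕ => qcpow q ((h - 1) * ((m : ℂ) + 1)) * χ ((m + 1 : ℕ) : ZMod f) /
      Complex.exp (((1 - ((j + 1 : ℕ) : ℂ)) - 1) * (Real.log (qnumR q ((m : ℝ) + 1)) : ℂ))) :=
    (M1.1.mul_right _).congr fun m => (e1 m).symm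
  have S2 : Summable (fun m : ℕ => qcpow q (h * ((m : ℂ) + 1)) * χ ((m + 1 : ℕ) : ZMod f) /
      Complex.exp ((1 - ((j + 1 : ℕ) : ℂ)) * (Real.log (qnumR q ((m : ℝ) + 1)) : ℂ))) :=
    (M2.1.mul_right _).congr fun m => (e2 m).symm
  refine ⟨S1, S2, ?_⟩
  rw [hqL, tsum_congr e1, tsum_congr e2, tsum_mul_right, tsum_mul_right, M1.2, M2.2,
    qbetaChi_eq hq0 hq1 h f hf χ j]
  have hgg : ∀ l : ℕ, gaux q f χ (h + (l : ℂ)) = gaux q f χ (h - 1 + ((l + 1 : ℕ) : ℂ)) := by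
    intro l
    congr 1
    push_cast
    ring
  have hBeta : ∑ l ∈ Finset.range (j + 2),
      ((j + 1).choose l : ℂ) * (-1) ^ l * (((l : ℂ) + h - 1) * gaux q f χ (h - 1 + (l : ℂ)))
      = (h - 1) * (∑ l ∈ Finset.range (j + 1 + 1),
          ((j + 1).choose l : ℂ) * (-1) ^ l * gaux q f χ (h - 1 + (l : ℂ)))
        + (-((j : ℂ) + 1)) * (∑ l ∈ Finset.range (j + 1),
          (j.choose l : ℂ) * (-1) ^ l * gaux q f χ (h + (l : ℂ))) :=
    reindex_lemma j h (fun l => gaux q f χ (h - 1 + (l : ℂ)))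
      (fun l => gaux q f χ (h + (l : ℂ))) hgg
  rw [hBeta]
  have hu : (1 : ℂ) - (q : ℂ) ≠ 0 := by
    rw [show (1 : ℂ) - (q : ℂ) = (((1 - q : ℝ)) : ℂ) by push_cast; ring]
    exact_mod_cast (by linarith : (1:ℝ) - q ≠ 0)
  have hj1 : ((j : ℂ) + 1) ≠ 0 := Nat.cast_add_one_ne_zero j
  rw [show (1 - ((j + 1 : ℕ) : ℂ)) - 1 = -((j : ℂ) + 1) by push_cast; ring,
    show ((j + 1 : ℕ) : ℂ) = (j : ℂ) + 1 by push_cast; ring]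
  have key : ∀ (A C u K : ℂ), u ≠ 0 → K ≠ 0 →
      ((h - 1) * u / (-K)) * (A * (u⁻¹) ^ (j + 1)) + C * (u⁻¹) ^ j
      = -((u⁻¹) ^ j * ((h - 1) * A + (-K) * C)) / K := by
    intro A C u K hu hK
    have hcan : u * u⁻¹ ^ (j + 1) = u⁻¹ ^ j := by
      rw [pow_succ, mul_comm (u⁻¹ ^ j) u⁻¹, ← mul_assoc, mul_inv_cancel₀ hu, one_mul]
    have hK1 : K * K⁻¹ = 1 := mul_inv_cancel₀ hK
    rw [div_neg, div_eq_mul_inv, div_eq_mul_inv]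
    linear_combination (-(h - 1) * A * K⁻¹) * hcan + (-(C * u⁻¹ ^ j)) * hK1
  exact key _ _ _ _ hu hj1
end

section
/- For every real x > 0, every h ∈ ℂ with Re(h) > 1, and every s ∈ ℂ with Re(s) > 1, the following integral representation holds: (1/Γ(s)) · ∫_0^∞ F_{χ,q}(−t, x | h) · t^{s−2} dt = L_q^h(s, χ | x), where F_{χ,q}(−t, x | h) = (h−1)(1−q) · Σ_{m=0}^{∞} q^{(h−1)m}·χ(m)·exp(−[x+m]_q·t) + t · Σ_{m=0}^{∞} q^{hm+x}·χ(m)·exp(−[x+m]_q·t), the integral is over real t > 0 with t^{s−2} = exp((s−2)·Real.log t), and both the integral and all series converge absolutely. -/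
open Complex Finset Filter

/-- `F_{χ,q}(-t, x | h) = (h-1)(1-q) ∑ q^{(h-1)m} χ(m) e^{-[x+m]_q t}
  + t ∑ q^{hm+x} χ(m) e^{-[x+m]_q t}` for real `t`. -/
noncomputable def FchiNeg (q : ℝ) (h : ℂ) (f : ℕ) (χ : DirichletCharacter ℂ f)
    (x t : ℝ) : ℂ :=
  (h - 1) * (1 - (q : ℂ)) *
    (∑' m : ℕ, qcpow q ((h - 1) * (m : ℂ)) * χ (m : ZMod f) *
      Complex.exp (-((qnumR q (x + m) : ℂ)) * (t : ℂ))) +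
  (t : ℂ) * ∑' m : ℕ, qcpow q (h * (m : ℂ) + (x : ℂ)) * χ (m : ZMod f) *
      Complex.exp (-((qnumR q (x + m) : ℂ)) * (t : ℂ))

section Aux
open MeasureTheory Set

lemma cexp_mul_log {b : ℝ} (hb : 0 < b) (w : ℂ) :
    Complex.exp (w * (Real.log b : ℂ)) = (b : ℂ) ^ w := by
  rw [Complex.ofReal_log hb.le,
    Complex.cpow_def_of_ne_zero (by exact_mod_cast hb.ne'), mul_comm]

lemma key_lemma (a : ℕ → ℝ) (c : ℕ → ℂ) (r : ℝ) (hr0 : 0 ≤ r) (hr1 : r < 1)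
    (ha0 : 0 < a 0) (hale : ∀ m, a 0 ≤ a m) (hc : ∀ m, ‖c m‖ ≤ r ^ m)
    (w : ℂ) (hw : 0 < w.re) :
    (∀ t : ℝ, 0 < t → Summable (fun m => c m * Complex.exp (-(a m : ℂ) * t))) ∧
    MeasureTheory.IntegrableOn
      (fun t : ℝ => (t : ℂ) ^ (w - 1) • (∑' m, c m * Complex.exp (-(a m : ℂ) * t)))
      (Set.Ioi 0) ∧
    Summable (fun m => c m / (a m : ℂ) ^ w) ∧
    HasSum (fun m => Complex.Gamma w * c m / (a m : ℂ) ^ w)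
      (mellin (fun t => ∑' m, c m * Complex.exp (-(a m : ℂ) * t)) w) := by
  have ha_pos : ∀ m, 0 < a m := fun m => lt_of_lt_of_le ha0 (hale m)
  have hgeo : Summable (fun m : ℕ => r ^ m) := summable_geometric_of_lt_one hr0 hr1
  have hnexp : ∀ (y t : ℝ), ‖Complex.exp (-(y : ℂ) * t)‖ = Real.exp (-(y * t)) := by
    intro y t
    rw [Complex.norm_exp]
    norm_num
  have hterm : ∀ t : ℝ, 0 ≤ t → ∀ m,
      ‖c m * Complex.exp (-(a m : ℂ) * t)‖ ≤ r ^ m * Real.exp (-(a 0 * t)) := by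
    intro t ht m
    rw [norm_mul, hnexp]
    exact mul_le_mul (hc m) (Real.exp_le_exp.2 (by nlinarith [hale m]))
      (Real.exp_pos _).le (pow_nonneg hr0 m)
  have hsummt : ∀ t : ℝ, 0 < t → Summable (fun m => c m * Complex.exp (-(a m : ℂ) * t)) := by
    intro t ht
    refine Summable.of_norm_bounded (hgeo.mul_right (Real.exp (-(a 0 * t)))) (hterm t ht.le)
  have hScont : ContinuousOn (fun t : ℝ => ∑' m, c m * Complex.exp (-(a m : ℂ) * t))
      (Set.Ici 0) := by
    refine continuousOn_tsum (fun m => Continuous.continuousOn (by fun_prop)) hgeo ?_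
    intro m t ht
    calc ‖c m * Complex.exp (-(a m : ℂ) * t)‖ ≤ r ^ m * Real.exp (-(a 0 * t)) :=
        hterm t ht m
      _ ≤ r ^ m * 1 := by
        refine mul_le_mul_of_nonneg_left (Real.exp_le_one_iff.2 ?_) (pow_nonneg hr0 m)
        simp only [neg_nonpos]
        exact mul_nonneg ha0.le ht
      _ = r ^ m := mul_one _
  have hSbound : ∀ t : ℝ, 0 ≤ t →
      ‖∑' m, c m * Complex.exp (-(a m : ℂ) * t)‖ ≤ (1 - r)⁻¹ * Real.exp (-(a 0 * t)) := by
    intro t ht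
    have := tsum_of_norm_bounded (hgeo.hasSum.mul_right (Real.exp (-(a 0 * t)))) (hterm t ht)
    rwa [tsum_geometric_of_lt_one hr0 hr1] at this
  have hInt : MeasureTheory.IntegrableOn
      (fun t : ℝ => (t : ℂ) ^ (w - 1) • (∑' m, c m * Complex.exp (-(a m : ℂ) * t)))
      (Set.Ioi 0) := by
    have hmeas : AEStronglyMeasurable
        (fun t : ℝ => (t : ℂ) ^ (w - 1) • (∑' m, c m * Complex.exp (-(a m : ℂ) * t)))
        (volume.restrict (Set.Ioi 0)) := by
      refine ContinuousOn.aestronglyMeasurable ?_ measurableSet_Ioi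
      refine ContinuousOn.fun_smul ?_ (hScont.mono Ioi_subset_Ici_self)
      intro t ht
      exact (Complex.continuousAt_ofReal_cpow_const t (w - 1) (Or.inr (ne_of_gt ht))).continuousWithinAt
    have hg : MeasureTheory.IntegrableOn
        (fun t : ℝ => (1 - r)⁻¹ * (t ^ (w.re - 1) * Real.exp (-(a 0) * t))) (Set.Ioi 0) := by
      have := (integrableOn_rpow_mul_exp_neg_mul_rpow
        (by linarith : (-1 : ℝ) < w.re - 1) zero_lt_one ha0)
      simp only [Real.rpow_one] at this
      exact this.const_mul _
    refine Integrable.mono' hg hmeas ?_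
    refine (MeasureTheory.ae_restrict_iff' measurableSet_Ioi).2 (Eventually.of_forall ?_)
    intro t ht
    rw [Set.mem_Ioi] at ht
    rw [norm_smul, Complex.norm_cpow_eq_rpow_re_of_pos ht]
    simp only [Complex.sub_re, Complex.one_re]
    calc t ^ (w.re - 1) * ‖∑' m, c m * Complex.exp (-(a m : ℂ) * t)‖
        ≤ t ^ (w.re - 1) * ((1 - r)⁻¹ * Real.exp (-(a 0 * t))) :=
          mul_le_mul_of_nonneg_left (hSbound t ht.le) (Real.rpow_nonneg ht.le _)
      _ = (1 - r)⁻¹ * (t ^ (w.re - 1) * Real.exp (-(a 0) * t)) := by rw [neg_mul]; ring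
  have hbnd : ∀ m, ‖c m‖ / a m ^ w.re ≤ r ^ m / a 0 ^ w.re := by
    intro m
    gcongr
    · exact hc m
    · exact hale m
  have h_sum : Summable fun m => ‖c m‖ / a m ^ w.re := by
    refine Summable.of_nonneg_of_le (fun m => div_nonneg (norm_nonneg _) (Real.rpow_nonneg (ha_pos m).le _)) hbnd (hgeo.div_const _)
  have hsum2 : Summable (fun m => c m / (a m : ℂ) ^ w) := by
    refine Summable.of_norm_bounded h_sum fun m => ?_
    rw [norm_div,
      Complex.norm_cpow_eq_rpow_re_of_pos (ha_pos m)]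
  have hmell : HasSum (fun m => Complex.Gamma w * c m / (a m : ℂ) ^ w)
      (mellin (fun t => ∑' m, c m * Complex.exp (-(a m : ℂ) * t)) w) := by
    refine hasSum_mellin (fun m => Or.inr (ha_pos m)) hw ?_ h_sum
    intro t ht
    rw [Set.mem_Ioi] at ht
    have : (fun m => c m * (Real.exp (-(a m) * t) : ℂ)) =
        fun m => c m * Complex.exp (-(a m : ℂ) * t) := by
      funext m
      push_cast
      ring_nf
    rw [this]
    exact (hsummt t ht).hasSum
  exact ⟨hsummt, hInt, hsum2, hmell⟩

end Aux

/-- integral representation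
`(1/Γ(s)) ∫_0^∞ F_{χ,q}(-t, x | h) t^{s-2} dt = L_q^h(s, χ | x)` for `Re(s) > 1`,
with all series and the integral converging absolutely. -/
theorem hqLH_integral_representation (q : ℝ) (hq0 : 0 < q) (hq1 : q < 1)
    (h : ℂ) (hh : 1 < h.re) (f : ℕ) (hf : 1 ≤ f) (χ : DirichletCharacter ℂ f)
    (x : ℝ) (hx : 0 < x) (s : ℂ) (hs : 1 < s.re) :
    (∀ t : ℝ, 0 < t →
      Summable (fun m : ℕ => qcpow q ((h - 1) * (m : ℂ)) * χ (m : ZMod f) *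
        Complex.exp (-((qnumR q (x + m) : ℂ)) * (t : ℂ))) ∧
      Summable (fun m : ℕ => qcpow q (h * (m : ℂ) + (x : ℂ)) * χ (m : ZMod f) *
        Complex.exp (-((qnumR q (x + m) : ℂ)) * (t : ℂ)))) ∧
    MeasureTheory.IntegrableOn
      (fun t : ℝ => FchiNeg q h f χ x t * Complex.exp ((s - 2) * (Real.log t : ℂ)))
      (Set.Ioi 0) ∧
    Summable (fun m : ℕ => qcpow q ((h - 1) * (m : ℂ)) * χ (m : ZMod f) /
      Complex.exp ((s - 1) * (Real.log (qnumR q (x + m)) : ℂ))) ∧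
    Summable (fun m : ℕ => qcpow q (h * (m : ℂ) + (x : ℂ)) * χ (m : ZMod f) /
      Complex.exp (s * (Real.log (qnumR q (x + m)) : ℂ))) ∧
    (1 / Complex.Gamma s) *
        ∫ t in Set.Ioi (0 : ℝ), FchiNeg q h f χ x t * Complex.exp ((s - 2) * (Real.log t : ℂ)) =
      hqLH q h s f χ x := by
  
  have hlq : Real.log q < 0 := Real.log_neg hq0 hq1
  have ha_pos : ∀ m : ℕ, 0 < qnumR q (x + m) := by
    intro m
    have h1 : (x + (m : ℝ)) * Real.log q < 0 := mul_neg_of_pos_of_neg (by positivity) hlq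
    exact div_pos (sub_pos.2 (Real.exp_lt_one_iff.2 h1)) (sub_pos.2 hq1)
  have hale : ∀ m : ℕ, qnumR q (x + ((0 : ℕ) : ℝ)) ≤ qnumR q (x + m) := by
    intro m
    unfold qnumR
    have hd : (0 : ℝ) < 1 - q := by linarith
    have hexp : Real.exp ((x + (m : ℝ)) * Real.log q) ≤
        Real.exp ((x + ((0 : ℕ) : ℝ)) * Real.log q) := by
      apply Real.exp_le_exp.2
      push_cast
      nlinarith [Nat.cast_nonneg (α := ℝ) m]
    gcongr
  set r : ℝ := Real.exp ((h.re - 1) * Real.log q) with hr_def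
  have hr0 : 0 ≤ r := (Real.exp_pos _).le
  have hr1 : r < 1 := Real.exp_lt_one_iff.2 (mul_neg_of_pos_of_neg (by linarith) hlq)
  have hqc : ∀ z : ℂ, ‖qcpow q z‖ = Real.exp (z.re * Real.log q) := by
    intro z
    rw [qcpow, Complex.norm_exp]
    congr 1
    simp [Complex.mul_re]
  have hc1 : ∀ m : ℕ, ‖qcpow q ((h - 1) * (m : ℂ)) * χ (m : ZMod f)‖ ≤ r ^ m := by
    intro m
    rw [norm_mul]
    have h1 : ‖qcpow q ((h - 1) * (m : ℂ))‖ = Real.exp ((h.re - 1) * m * Real.log q) := by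
      rw [hqc]
      congr 1
      simp [Complex.mul_re, Complex.sub_re]
    calc ‖qcpow q ((h - 1) * (m : ℂ))‖ * ‖χ (m : ZMod f)‖
        ≤ Real.exp ((h.re - 1) * m * Real.log q) * 1 := by
          rw [h1]
          exact mul_le_mul_of_nonneg_left (DirichletCharacter.norm_le_one χ _)
            (Real.exp_pos _).le
      _ = r ^ m := by
          rw [mul_one, show (h.re - 1) * (m : ℝ) * Real.log q
            = (m : ℝ) * ((h.re - 1) * Real.log q) by ring, Real.exp_nat_mul]
  have hc2 : ∀ m : ℕ, ‖qcpow q (h * (m : ℂ) + (x : ℂ)) * χ (m : ZMod f)‖ ≤ r ^ m := by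
    intro m
    rw [norm_mul]
    have h1 : ‖qcpow q (h * (m : ℂ) + (x : ℂ))‖
        = Real.exp ((h.re * m + x) * Real.log q) := by
      rw [hqc]
      congr 1
      simp [Complex.add_re, Complex.mul_re]
    calc ‖qcpow q (h * (m : ℂ) + (x : ℂ))‖ * ‖χ (m : ZMod f)‖
        ≤ Real.exp ((h.re * m + x) * Real.log q) * 1 := by
          rw [h1]
          exact mul_le_mul_of_nonneg_left (DirichletCharacter.norm_le_one χ _)
            (Real.exp_pos _).le
      _ ≤ Real.exp ((h.re - 1) * m * Real.log q) := by
          rw [mul_one]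
          apply Real.exp_le_exp.2
          nlinarith [mul_nonneg (by positivity : (0:ℝ) ≤ (m:ℝ) + x) (neg_nonneg.2 hlq.le)]
      _ = r ^ m := by
          rw [show (h.re - 1) * (m : ℝ) * Real.log q
            = (m : ℝ) * ((h.re - 1) * Real.log q) by ring, Real.exp_nat_mul]
  obtain ⟨P1, I1, T1sum, H1⟩ := key_lemma (fun m : ℕ => qnumR q (x + m))
    (fun m : ℕ => qcpow q ((h - 1) * (m : ℂ)) * χ (m : ZMod f)) r hr0 hr1
    (ha_pos 0) hale hc1 (s - 1) (by simp only [Complex.sub_re, Complex.one_re]; linarith)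
  obtain ⟨P2, I2, T2sum, H2⟩ := key_lemma (fun m : ℕ => qnumR q (x + m))
    (fun m : ℕ => qcpow q (h * (m : ℂ) + (x : ℂ)) * χ (m : ZMod f)) r hr0 hr1
    (ha_pos 0) hale hc2 s (by linarith)
  have heq : Set.EqOn
      (fun t : ℝ => (h - 1) * (1 - (q : ℂ)) *
          ((t : ℂ) ^ (s - 1 - 1) • (∑' m : ℕ, (qcpow q ((h - 1) * (m : ℂ)) * χ (m : ZMod f)) *
            Complex.exp (-((qnumR q (x + m) : ℝ) : ℂ) * t))) +
        (t : ℂ) ^ (s - 1) • (∑' m : ℕ, (qcpow q (h * (m : ℂ) + (x : ℂ)) * χ (m : ZMod f)) *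
            Complex.exp (-((qnumR q (x + m) : ℝ) : ℂ) * t)))
      (fun t : ℝ => FchiNeg q h f χ x t * Complex.exp ((s - 2) * (Real.log t : ℂ)))
      (Set.Ioi 0) := by
    intro t ht
    rw [Set.mem_Ioi] at ht
    simp only [smul_eq_mul, FchiNeg]
    rw [cexp_mul_log ht (s - 2)]
    rw [show s - 1 - 1 = s - 2 by ring]
    rw [show (t : ℂ) ^ (s - 1) = (t : ℂ) * (t : ℂ) ^ (s - 2) by
      rw [show s - 1 = 1 + (s - 2) by ring,
        Complex.cpow_add _ _ (by exact_mod_cast ht.ne'), Complex.cpow_one]]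
    ring
  have hT1eq : (fun m : ℕ => qcpow q ((h - 1) * (m : ℂ)) * χ (m : ZMod f) /
      Complex.exp ((s - 1) * (Real.log (qnumR q (x + m)) : ℂ)))
      = fun m : ℕ => (qcpow q ((h - 1) * (m : ℂ)) * χ (m : ZMod f)) /
        ((qnumR q (x + m) : ℝ) : ℂ) ^ (s - 1) := by
    funext m
    rw [cexp_mul_log (ha_pos m)]
  have hT2eq : (fun m : ℕ => qcpow q (h * (m : ℂ) + (x : ℂ)) * χ (m : ZMod f) /
      Complex.exp (s * (Real.log (qnumR q (x + m)) : ℂ)))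
      = fun m : ℕ => (qcpow q (h * (m : ℂ) + (x : ℂ)) * χ (m : ZMod f)) /
        ((qnumR q (x + m) : ℝ) : ℂ) ^ s := by
    funext m
    rw [cexp_mul_log (ha_pos m)]
  refine ⟨fun t ht => ⟨P1 t ht, P2 t ht⟩, ?_, ?_, ?_, ?_⟩
  · exact MeasureTheory.IntegrableOn.congr_fun ((I1.const_mul ((h - 1) * (1 - (q : ℂ)))).add I2) heq measurableSet_Ioi
  · rw [hT1eq]; exact T1sum
  · rw [hT2eq]; exact T2sum
  · have hm1 := H1.tsum_eq
    have hm2 := H2.tsum_eq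
    simp_rw [mul_div_assoc, tsum_mul_left] at hm1 hm2
    have hIeq : (∫ t in Set.Ioi (0 : ℝ),
        FchiNeg q h f χ x t * Complex.exp ((s - 2) * (Real.log t : ℂ)))
        = (h - 1) * (1 - (q : ℂ)) *
            mellin (fun t : ℝ => ∑' m : ℕ, (qcpow q ((h - 1) * (m : ℂ)) * χ (m : ZMod f)) *
              Complex.exp (-((qnumR q (x + m) : ℝ) : ℂ) * t)) (s - 1) +
          mellin (fun t : ℝ => ∑' m : ℕ, (qcpow q (h * (m : ℂ) + (x : ℂ)) * χ (m : ZMod f)) *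
              Complex.exp (-((qnumR q (x + m) : ℝ) : ℂ) * t)) s := by
      rw [mellin, mellin, ← MeasureTheory.integral_const_mul,
        ← MeasureTheory.integral_add (I1.const_mul ((h - 1) * (1 - (q : ℂ)))) I2]
      exact (MeasureTheory.setIntegral_congr_fun measurableSet_Ioi heq).symm
    rw [hIeq, ← hm1, ← hm2, hqLH, hT1eq, hT2eq]
    have hsne : s - 1 ≠ 0 := by
      intro hcon
      apply_fun Complex.re at hcon
      simp only [Complex.sub_re, Complex.one_re, Complex.zero_re] at hcon
      linarith
    have hGs : Complex.Gamma s = (s - 1) * Complex.Gamma (s - 1) := by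
      have := Complex.Gamma_add_one (s - 1) hsne
      rwa [sub_add_cancel] at this
    have hGne : Complex.Gamma (s - 1) ≠ 0 := by
      apply Complex.Gamma_ne_zero
      intro m hcon
      apply_fun Complex.re at hcon
      simp only [Complex.sub_re, Complex.one_re, Complex.neg_re, Complex.natCast_re] at hcon
      have : (0 : ℝ) ≤ (m : ℝ) := Nat.cast_nonneg m
      linarith
    rw [hGs]
    field_simp
end

section
/- For every n ∈ ℕ, every x ∈ ℝ, and every h ∈ ℂ with Re(h) > 1, the (h,q)-Bernoulli polynomial tends to the ordinary Bernoulli polynomial as q → 1 from the left: lim_{q→1⁻} β_{n,q}^h(x) = B_n(x), where B_n is the n-th Bernoulli polynomial (with generating function t·e^{xt}/(e^t − 1) = Σ_{n≥0} B_n(x) t^n/n!). -/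
open Complex Finset Filter Asymptotics

/-- Analytic extension of `(e^z - 1)/z`. -/
noncomputable def QBE : ℂ → ℂ := dslope (fun z => Complex.exp z - 1) 0

lemma QBE_zero : QBE 0 = 1 := by
  rw [QBE, dslope_same]
  have : deriv (fun z : ℂ => Complex.exp z - 1) = Complex.exp := by
    funext w
    rw [deriv_sub_const, Complex.deriv_exp]
  rw [this, Complex.exp_zero]

lemma QBE_mul (z : ℂ) : z * QBE z = Complex.exp z - 1 := by
  rcases eq_or_ne z 0 with rfl | hz
  · simp
  · rw [QBE, dslope_of_ne _ hz, slope_def_field]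
    field_simp
    simp only [Complex.exp_zero, sub_self, sub_zero]
    ring

lemma QBE_analyticAt : AnalyticAt ℂ QBE 0 := by
  have : AnalyticAt ℂ (fun z => Complex.exp z - 1) 0 := analyticAt_cexp.sub analyticAt_const
  obtain ⟨p, hp⟩ := this
  exact (hp.has_fpower_series_dslope_fslope).analyticAt

lemma QBE_ne_zero {z : ℂ} (hz : z ≠ 0) (he : Complex.exp z ≠ 1) : QBE z ≠ 0 := by
  intro h0
  have := QBE_mul z
  rw [h0, mul_zero] at this
  exact he (by linear_combination -this)

/-- `∑_{l=0}^n (-1)^l C(n,l) (c+l)^k`. -/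
noncomputable def QBT (n k : ℕ) (c : ℂ) : ℂ :=
  ∑ l ∈ range (n + 1), (-1 : ℂ) ^ l * (n.choose l : ℂ) * (c + l) ^ k

lemma QBT_succ (n k : ℕ) (c : ℂ) : QBT (n + 1) k c = QBT n k c - QBT n k (c + 1) := by
  unfold QBT
  rw [Finset.sum_range_succ'
    (fun l => (-1 : ℂ) ^ l * ((n + 1).choose l : ℂ) * (c + l) ^ k) (n + 1)]
  have hsplit : ∀ l ∈ range (n + 1),
      (-1 : ℂ) ^ (l + 1) * ((n + 1).choose (l + 1) : ℂ) * (c + (l + 1 : ℕ)) ^ k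
        = -((-1 : ℂ) ^ l * (n.choose l : ℂ) * ((c + 1) + l) ^ k)
          + (-1 : ℂ) ^ (l + 1) * (n.choose (l + 1) : ℂ) * (c + (l + 1 : ℕ)) ^ k := by
    intro l _
    rw [Nat.choose_succ_succ, Nat.cast_add, pow_succ]
    push_cast
    ring
  rw [Finset.sum_congr rfl hsplit, Finset.sum_add_distrib]
  have h2 : (∑ l ∈ range (n + 1),
      (-1 : ℂ) ^ (l + 1) * (n.choose (l + 1) : ℂ) * (c + (l + 1 : ℕ)) ^ k)
      = ∑ l ∈ range n,
      (-1 : ℂ) ^ (l + 1) * (n.choose (l + 1) : ℂ) * (c + (l + 1 : ℕ)) ^ k := by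
    rw [Finset.sum_range_succ, Nat.choose_succ_self]
    simp
  have h3 : (∑ l ∈ range (n + 1), (-1 : ℂ) ^ l * (n.choose l : ℂ) * (c + l) ^ k)
      = (∑ l ∈ range n,
        (-1 : ℂ) ^ (l + 1) * (n.choose (l + 1) : ℂ) * (c + (l + 1 : ℕ)) ^ k)
        + (-1 : ℂ) ^ 0 * (n.choose 0 : ℂ) * (c + (0 : ℕ)) ^ k :=
    Finset.sum_range_succ' _ n
  have h4 : (∑ l ∈ range n,
      (-1 : ℂ) ^ (l + 1) * (n.choose (l + 1) : ℂ) * (c + (l + 1 : ℕ)) ^ k)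
      = (∑ l ∈ range (n + 1), (-1 : ℂ) ^ l * (n.choose l : ℂ) * (c + l) ^ k) - c ^ k := by
    rw [h3]; simp
  rw [h2, h4]
  have h5 : ∀ l ∈ range (n + 1),
      -((-1 : ℂ) ^ l * (n.choose l : ℂ) * ((c + 1) + l) ^ k)
      = -((fun l => (-1 : ℂ) ^ l * (n.choose l : ℂ) * ((c + 1) + l) ^ k) l) := fun l _ => rfl
  rw [Finset.sum_congr rfl h5, Finset.sum_neg_distrib]
  simp only [pow_zero, Nat.choose_zero_right, Nat.cast_one, Nat.cast_zero, add_zero, one_mul]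
  ring

lemma QBT_main (n : ℕ) :
    (∀ k, k < n → ∀ c, QBT n k c = 0) ∧ (∀ c, QBT n n c = (-1 : ℂ) ^ n * (n.factorial : ℂ)) := by
  induction n with
  | zero =>
    refine ⟨fun k hk c => absurd hk (Nat.not_lt_zero k), fun c => ?_⟩
    simp [QBT]
  | succ n ih =>
    obtain ⟨ih0, ihd⟩ := ih
    have haux : ∀ c : ℂ, QBT n (n + 1) c
        = QBT n (n + 1) 0 + (n + 1 : ℂ) * c * ((-1 : ℂ) ^ n * (n.factorial : ℂ)) := by
      intro c
      have hexp : ∀ l ∈ range (n + 1),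
          (-1 : ℂ) ^ l * (n.choose l : ℂ) * (c + l) ^ (n + 1)
          = ∑ j ∈ range (n + 2),
              ((n + 1).choose j : ℂ) * c ^ j *
                ((-1 : ℂ) ^ l * (n.choose l : ℂ) * ((0 : ℂ) + l) ^ (n + 1 - j)) := by
        intro l _
        rw [add_pow, Finset.mul_sum]
        refine Finset.sum_congr rfl fun j _ => ?_
        rw [zero_add]
        ring
      have hswap : QBT n (n + 1) c
          = ∑ j ∈ range (n + 2), ((n + 1).choose j : ℂ) * c ^ j * QBT n (n + 1 - j) 0 := by
        unfold QBT
        rw [Finset.sum_congr rfl hexp, Finset.sum_comm]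
        refine Finset.sum_congr rfl fun j _ => ?_
        rw [← Finset.mul_sum]
      rw [hswap]
      rw [Finset.sum_range_succ' _ (n + 1), Finset.sum_range_succ' _ n]
      have hz : ∀ j ∈ range n,
          ((n + 1).choose (j + 1 + 1) : ℂ) * c ^ (j + 1 + 1) * QBT n (n + 1 - (j + 1 + 1)) 0
          = 0 := by
        intro j hj
        have hj' : j < n := Finset.mem_range.mp hj
        rw [ih0 (n + 1 - (j + 1 + 1)) (by omega) 0]
        ring
      rw [Finset.sum_congr rfl hz, Finset.sum_const_zero]
      have e1 : n + 1 - (0 + 1) = n := by omega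
      rw [e1, ihd 0, Nat.choose_one_right]
      simp only [Nat.choose_zero_right, Nat.cast_one, pow_zero, one_mul, Nat.sub_zero,
        Nat.cast_add, pow_one]
      ring
    constructor
    · intro k hk c
      rw [QBT_succ]
      rcases Nat.lt_succ_iff_lt_or_eq.mp hk with hk' | rfl
      · rw [ih0 k hk' c, ih0 k hk' (c + 1), sub_zero]
      · rw [ihd c, ihd (c + 1), sub_self]
    · intro c
      rw [QBT_succ, haux c, haux (c + 1), Nat.factorial_succ]
      push_cast
      ring

lemma QB_analyticAt_deriv {f : ℂ → ℂ} {z : ℂ} (hf : AnalyticAt ℂ f z) :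
    AnalyticAt ℂ (deriv f) z := by
  obtain ⟨s, hmem, hs⟩ := hf.eventually_analyticAt.exists_mem
  exact (AnalyticOnNhd.deriv (fun y hy => hs y hy)) z (mem_of_mem_nhds hmem)

lemma QB_analyticAt_iteratedDeriv {f : ℂ → ℂ} {z : ℂ} (hf : AnalyticAt ℂ f z) (k : ℕ) :
    AnalyticAt ℂ (iteratedDeriv k f) z := by
  induction k with
  | zero => simpa [iteratedDeriv_zero] using hf
  | succ k ih => rw [iteratedDeriv_succ]; exact QB_analyticAt_deriv ih

lemma QB_leibniz_sum (a b : ℕ → ℂ) (k : ℕ) :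
    ∑ i ∈ range (k + 1), (k.choose i : ℂ) * (a (i + 1) * b (k - i) + a i * b (k - i + 1))
      = ∑ i ∈ range (k + 2), ((k + 1).choose i : ℂ) * (a i * b (k + 1 - i)) := by
  rw [Finset.sum_range_succ' (fun i => ((k + 1).choose i : ℂ) * (a i * b (k + 1 - i))) (k + 1)]
  have h1 : ∀ i ∈ range (k + 1),
      ((k + 1).choose (i + 1) : ℂ) * (a (i + 1) * b (k + 1 - (i + 1)))
        = (k.choose i : ℂ) * (a (i + 1) * b (k - i))
          + (k.choose (i + 1) : ℂ) * (a (i + 1) * b (k - i)) := by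
    intro i _
    rw [Nat.choose_succ_succ, Nat.cast_add, Nat.succ_sub_succ_eq_sub]
    ring
  rw [Finset.sum_congr rfl h1, Finset.sum_add_distrib]
  have h2 : ∀ i ∈ range (k + 1),
      (k.choose i : ℂ) * (a (i + 1) * b (k - i) + a i * b (k - i + 1))
        = (k.choose i : ℂ) * (a (i + 1) * b (k - i)) + (k.choose i : ℂ) * (a i * b (k - i + 1)) :=
    fun i _ => by ring
  rw [Finset.sum_congr rfl h2, Finset.sum_add_distrib]
  have h3 : (∑ i ∈ range (k + 1), (k.choose i : ℂ) * (a i * b (k - i + 1)))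
      = (∑ i ∈ range k, (k.choose (i + 1) : ℂ) * (a (i + 1) * b (k - (i + 1) + 1)))
        + (k.choose 0 : ℂ) * (a 0 * b (k - 0 + 1)) := Finset.sum_range_succ' _ k
  have h4 : ∀ i ∈ range k,
      (k.choose (i + 1) : ℂ) * (a (i + 1) * b (k - (i + 1) + 1))
        = (k.choose (i + 1) : ℂ) * (a (i + 1) * b (k - i)) := by
    intro i hi
    have hik : i < k := Finset.mem_range.mp hi
    have e : k - (i + 1) + 1 = k - i := by omega
    rw [e]
  have h5 : (∑ i ∈ range (k + 1), (k.choose (i + 1) : ℂ) * (a (i + 1) * b (k - i)))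
      = ∑ i ∈ range k, (k.choose (i + 1) : ℂ) * (a (i + 1) * b (k - i)) := by
    rw [Finset.sum_range_succ, Nat.choose_succ_self]
    simp
  rw [h3, Finset.sum_congr rfl h4, ← h5]
  simp only [Nat.choose_zero_right, Nat.cast_one, Nat.sub_zero, Nat.choose_zero_right]
  ring

lemma QB_iteratedDeriv_mul (k : ℕ) :
    ∀ (f g : ℂ → ℂ) (z : ℂ), AnalyticAt ℂ f z → AnalyticAt ℂ g z →
      iteratedDeriv k (fun u => f u * g u) z
        = ∑ i ∈ range (k + 1),
            (k.choose i : ℂ) * (iteratedDeriv i f z * iteratedDeriv (k - i) g z) := by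
  induction k with
  | zero => intro f g z _ _; simp
  | succ k ih =>
    intro f g z hf hg
    rw [iteratedDeriv_succ]
    have hev : iteratedDeriv k (fun u => f u * g u)
        =ᶠ[nhds z] fun w => ∑ i ∈ range (k + 1),
          (k.choose i : ℂ) * (iteratedDeriv i f w * iteratedDeriv (k - i) g w) := by
      filter_upwards [hf.eventually_analyticAt, hg.eventually_analyticAt] with w hfw hgw
      exact ih f g w hfw hgw
    rw [hev.deriv_eq]
    have hdiff : ∀ i ∈ range (k + 1), DifferentiableAt ℂ
        (fun w => (k.choose i : ℂ) * (iteratedDeriv i f w * iteratedDeriv (k - i) g w)) z := by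
      intro i _
      exact (((QB_analyticAt_iteratedDeriv hf i).differentiableAt).mul
        ((QB_analyticAt_iteratedDeriv hg (k - i)).differentiableAt)).const_mul _
    rw [deriv_fun_sum hdiff]
    have hterm : ∀ i ∈ range (k + 1),
        deriv (fun w => (k.choose i : ℂ) * (iteratedDeriv i f w * iteratedDeriv (k - i) g w)) z
        = (k.choose i : ℂ) * (iteratedDeriv (i + 1) f z * iteratedDeriv (k - i) g z
            + iteratedDeriv i f z * iteratedDeriv (k - i + 1) g z) := by
      intro i _
      rw [deriv_const_mul _ (d := fun w => iteratedDeriv i f w * iteratedDeriv (k - i) g w) (((QB_analyticAt_iteratedDeriv hf i).differentiableAt).mul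
        ((QB_analyticAt_iteratedDeriv hg (k - i)).differentiableAt))]
      rw [deriv_fun_mul ((QB_analyticAt_iteratedDeriv hf i).differentiableAt)
        ((QB_analyticAt_iteratedDeriv hg (k - i)).differentiableAt)]
      rw [← iteratedDeriv_succ, ← iteratedDeriv_succ]
    rw [Finset.sum_congr rfl hterm, QB_leibniz_sum (fun i => iteratedDeriv i f z)
      (fun j => iteratedDeriv j g z) k]

lemma QB_coeff_eq {f : ℂ → ℂ} {p : FormalMultilinearSeries ℂ ℂ ℂ}
    (hp : HasFPowerSeriesAt f p 0) (k : ℕ) :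
    (k.factorial : ℂ) * p.coeff k = iteratedDeriv k f 0 := by
  obtain ⟨r, hr⟩ := hp
  have h := hr.factorial_smul (1 : ℂ) k
  rw [FormalMultilinearSeries.apply_eq_pow_smul_coeff, one_pow, one_smul] at h
  rw [iteratedDeriv_eq_iteratedFDeriv, ← h, nsmul_eq_mul]

lemma QB_iteratedDeriv_exp (k : ℕ) : iteratedDeriv k Complex.exp = Complex.exp := by
  induction k with
  | zero => simp [iteratedDeriv_zero]
  | succ k ih => rw [iteratedDeriv_succ, ih, Complex.deriv_exp]

lemma QB_iteratedDeriv_exp_sub_one (k : ℕ) :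
    iteratedDeriv k (fun z : ℂ => Complex.exp z - 1) 0 = if k = 0 then 0 else 1 := by
  cases k with
  | zero => simp
  | succ k =>
    rw [iteratedDeriv_succ']
    have : deriv (fun z : ℂ => Complex.exp z - 1) = Complex.exp := by
      funext w; rw [deriv_sub_const, Complex.deriv_exp]
    rw [this, QB_iteratedDeriv_exp]
    simp

lemma QB_iteratedDeriv_id (k : ℕ) :
    iteratedDeriv k (fun z : ℂ => z) 0 = if k = 1 then 1 else 0 := by
  cases k with
  | zero => simp
  | succ k =>
    rw [iteratedDeriv_succ']
    have : deriv (fun z : ℂ => z) = fun _ => (1 : ℂ) := by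
      funext w; exact deriv_id w
    rw [this]
    cases k with
    | zero => simp
    | succ k =>
      rw [iteratedDeriv_succ']
      have h1 : deriv (fun _ : ℂ => (1 : ℂ)) = fun _ => (0 : ℂ) := by
        funext w; exact deriv_const w 1
      rw [h1]
      have h0 : ∀ m, iteratedDeriv m (fun _ : ℂ => (0 : ℂ)) = fun _ => 0 := by
        intro m
        induction m with
        | zero => simp [iteratedDeriv_zero]
        | succ m ihm =>
          rw [iteratedDeriv_succ, ihm]
          funext w
          simp
      rw [h0]
      simp

/-- The function `e^{xz}·((e^z-1)/z)⁻¹`, analytic extension of `z e^{xz}/(e^z - 1)`. -/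
noncomputable def QBB (x : ℝ) : ℂ → ℂ := fun z => Complex.exp (x * z) * (QBE z)⁻¹

lemma QBB_analyticAt (x : ℝ) : AnalyticAt ℂ (QBB x) 0 := by
  apply AnalyticAt.mul
  · exact analyticAt_cexp.comp (analyticAt_const.mul analyticAt_id)
  · exact QBE_analyticAt.inv (by rw [QBE_zero]; exact one_ne_zero)

/-- Value of the `k`-th Bernoulli polynomial at `x`, as a complex number. -/
noncomputable def QBBx (x : ℝ) (k : ℕ) : ℂ :=
  Polynomial.eval (x : ℂ) (Polynomial.map (algebraMap ℚ ℂ) (Polynomial.bernoulli k))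

lemma QBBx_rec (x : ℝ) (k : ℕ) :
    ∑ i ∈ range (k + 1), ((k + 1).choose i : ℂ) * QBBx x i = (k + 1 : ℂ) * (x : ℂ) ^ k := by
  have h := Polynomial.sum_bernoulli k
  have h2 := congrArg (fun P : Polynomial ℚ =>
    Polynomial.eval (x : ℂ) (Polynomial.map (algebraMap ℚ ℂ) P)) h
  simp only [Polynomial.map_sum, Polynomial.eval_finset_sum] at h2
  unfold QBBx
  have h3 : ∀ i ∈ range (k + 1), ((k + 1).choose i : ℂ) *
      Polynomial.eval (x : ℂ) (Polynomial.map (algebraMap ℚ ℂ) (Polynomial.bernoulli i))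
      = Polynomial.eval (x : ℂ) (Polynomial.map (algebraMap ℚ ℂ)
          (((k + 1).choose i : ℚ) • Polynomial.bernoulli i)) := by
    intro i _
    rw [Polynomial.smul_eq_C_mul, Polynomial.map_mul, Polynomial.eval_mul, Polynomial.map_C,
      Polynomial.eval_C]
    norm_num
  rw [Finset.sum_congr rfl h3, h2]
  simp [Polynomial.map_monomial, Polynomial.eval_monomial]
  ring

lemma QBB_iteratedDeriv_rec (x : ℝ) (k : ℕ) :
    ∑ i ∈ range (k + 1), ((k + 1).choose i : ℂ) * iteratedDeriv i (QBB x) 0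
      = (k + 1 : ℂ) * (x : ℂ) ^ k := by
  have hne : ∀ᶠ z in nhds (0 : ℂ), QBE z ≠ 0 :=
    QBE_analyticAt.continuousAt.eventually_ne (by rw [QBE_zero]; exact one_ne_zero)
  have hfe : (fun z => QBB x z * (Complex.exp z - 1))
      =ᶠ[nhds (0 : ℂ)] fun z => z * Complex.exp (x * z) := by
    filter_upwards [hne] with z hz
    rw [QBB, ← QBE_mul z]
    field_simp
  have key := hfe.iteratedDeriv_eq (k + 1)
  rw [QB_iteratedDeriv_mul (k + 1) (QBB x) (fun z => Complex.exp z - 1) 0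
    (QBB_analyticAt x) (analyticAt_cexp.sub analyticAt_const)] at key
  rw [QB_iteratedDeriv_mul (k + 1) (fun z : ℂ => z) (fun z => Complex.exp ((x : ℂ) * z)) 0
    analyticAt_id (analyticAt_cexp.comp (analyticAt_const.mul analyticAt_id))] at key
  have hexp : ∀ j, iteratedDeriv j (fun z => Complex.exp ((x : ℂ) * z)) 0 = (x : ℂ) ^ j := by
    intro j
    rw [iteratedDeriv_cexp_const_mul]
    simp
  have hrhs : (∑ i ∈ range (k + 1 + 1), ((k + 1).choose i : ℂ) *
      (iteratedDeriv i (fun z : ℂ => z) 0 *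
        iteratedDeriv (k + 1 - i) (fun z => Complex.exp ((x : ℂ) * z)) 0))
      = (k + 1 : ℂ) * (x : ℂ) ^ k := by
    rw [Finset.sum_eq_single 1]
    · rw [QB_iteratedDeriv_id, hexp]
      simp [Nat.choose_one_right]
    · intro i _ hi1
      rw [QB_iteratedDeriv_id, if_neg hi1]
      ring
    · intro habs
      exact absurd (Finset.mem_range.mpr (by omega)) habs
  rw [hrhs] at key
  rw [Finset.sum_range_succ] at key
  have htrans : ∀ i ∈ range (k + 1), ((k + 1).choose i : ℂ) *
      (iteratedDeriv i (QBB x) 0 * iteratedDeriv (k + 1 - i) (fun z => Complex.exp z - 1) 0)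
      = ((k + 1).choose i : ℂ) * iteratedDeriv i (QBB x) 0 := by
    intro i hi
    have hik : i < k + 1 := Finset.mem_range.mp hi
    rw [QB_iteratedDeriv_exp_sub_one, if_neg (by omega)]
    ring
  rw [Finset.sum_congr rfl htrans] at key
  have hlast : ((k + 1).choose (k + 1) : ℂ) * (iteratedDeriv (k + 1) (QBB x) 0 *
      iteratedDeriv (k + 1 - (k + 1)) (fun z => Complex.exp z - 1) 0) = 0 := by
    rw [Nat.sub_self, QB_iteratedDeriv_exp_sub_one]
    simp
  rw [hlast, add_zero] at key
  exact key

lemma QBB_iteratedDeriv (x : ℝ) (k : ℕ) : iteratedDeriv k (QBB x) 0 = QBBx x k := by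
  induction k using Nat.strong_induction_on with
  | _ k IH =>
    have h1 := QBB_iteratedDeriv_rec x k
    have h2 := QBBx_rec x k
    rw [Finset.sum_range_succ] at h1 h2
    have h3 : (∑ i ∈ range k, ((k + 1).choose i : ℂ) * iteratedDeriv i (QBB x) 0)
        = ∑ i ∈ range k, ((k + 1).choose i : ℂ) * QBBx x i :=
      Finset.sum_congr rfl fun i hi => by rw [IH i (Finset.mem_range.mp hi)]
    rw [h3] at h1
    have h4 : ((k + 1).choose k : ℂ) * iteratedDeriv k (QBB x) 0
        = ((k + 1).choose k : ℂ) * QBBx x k := by linear_combination h1 - h2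
    exact mul_left_cancel₀
      (Nat.cast_ne_zero.mpr (Nat.choose_pos (Nat.le_succ k)).ne') h4

lemma QBB_coeff (x : ℝ) {p : FormalMultilinearSeries ℂ ℂ ℂ}
    (hp : HasFPowerSeriesAt (QBB x) p 0) (k : ℕ) :
    (k.factorial : ℂ) * p.coeff k = QBBx x k := by
  rw [QB_coeff_eq hp k, QBB_iteratedDeriv]

lemma QBPsi_tendsto (x : ℝ) (h : ℂ) (n : ℕ) :
    Tendsto (fun t : ℝ => (∑ l ∈ range (n + 1),
        (-1 : ℂ) ^ l * (n.choose l : ℂ) * QBB x (((l : ℂ) + h - 1) * (t : ℂ))) / (-(t : ℂ)) ^ n)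
      (nhdsWithin 0 (Set.Iio (0 : ℝ))) (nhds (QBBx x n)) := by
  obtain ⟨p, hp⟩ := QBB_analyticAt x
  -- the Taylor remainder
  set err : ℂ → ℂ := fun y => QBB x y - ∑ k ∈ range (n + 1), p.coeff k * y ^ k with herr
  have hps : ∀ y : ℂ, p.partialSum (n + 1) y = ∑ k ∈ range (n + 1), p.coeff k * y ^ k := by
    intro y
    unfold FormalMultilinearSeries.partialSum
    refine Finset.sum_congr rfl fun k _ => ?_
    rw [FormalMultilinearSeries.apply_eq_pow_smul_coeff, smul_eq_mul, mul_comm]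
  have hO : err =O[nhds (0 : ℂ)] fun y => ‖y‖ ^ (n + 1) := by
    have h1 := hp.isBigO_sub_partialSum_pow (n + 1)
    simp only [zero_add] at h1
    exact h1.congr (fun y => by rw [herr, hps y]) fun _ => rfl
  -- algebraic decomposition
  have hdecomp : ∀ t : ℂ, (∑ l ∈ range (n + 1),
      (-1 : ℂ) ^ l * (n.choose l : ℂ) * QBB x (((l : ℂ) + h - 1) * t))
      = (-1 : ℂ) ^ n * QBBx x n * t ^ n
        + ∑ l ∈ range (n + 1), (-1 : ℂ) ^ l * (n.choose l : ℂ) * err (((l : ℂ) + h - 1) * t) := by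
    intro t
    have hsplit : ∀ l ∈ range (n + 1),
        (-1 : ℂ) ^ l * (n.choose l : ℂ) * QBB x (((l : ℂ) + h - 1) * t)
        = (∑ k ∈ range (n + 1),
            p.coeff k * t ^ k * ((-1 : ℂ) ^ l * (n.choose l : ℂ) * ((h - 1) + l) ^ k))
          + (-1 : ℂ) ^ l * (n.choose l : ℂ) * err (((l : ℂ) + h - 1) * t) := by
      intro l _
      have : QBB x (((l : ℂ) + h - 1) * t)
          = (∑ k ∈ range (n + 1), p.coeff k * (((l : ℂ) + h - 1) * t) ^ k)
            + err (((l : ℂ) + h - 1) * t) := by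
        rw [herr]; ring
      rw [this, mul_add, Finset.mul_sum]
      congr 1
      refine Finset.sum_congr rfl fun k _ => ?_
      rw [mul_pow]
      ring_nf
    rw [Finset.sum_congr rfl hsplit, Finset.sum_add_distrib]
    congr 1
    rw [Finset.sum_comm]
    have hinner : ∀ k ∈ range (n + 1),
        (∑ l ∈ range (n + 1),
          p.coeff k * t ^ k * ((-1 : ℂ) ^ l * (n.choose l : ℂ) * ((h - 1) + l) ^ k))
        = p.coeff k * t ^ k * QBT n k (h - 1) := by
      intro k _
      rw [QBT, Finset.mul_sum]
    rw [Finset.sum_congr rfl hinner]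
    rw [Finset.sum_eq_single n]
    · rw [(QBT_main n).2 (h - 1)]
      have hc := QBB_coeff x hp n
      linear_combination t ^ n * (-1 : ℂ) ^ n * hc
    · intro k hk hkn
      have hk' : k < n + 1 := Finset.mem_range.mp hk
      rw [(QBT_main n).1 k (by omega) (h - 1), mul_zero]
    · intro habs
      exact absurd (Finset.mem_range.mpr (by omega)) habs
  -- the error sum is Big-O of t^{n+1}
  have hEO : (fun t : ℂ => ∑ l ∈ range (n + 1),
      (-1 : ℂ) ^ l * (n.choose l : ℂ) * err (((l : ℂ) + h - 1) * t))
      =O[nhds (0 : ℂ)] fun t : ℂ => ‖t‖ ^ (n + 1) := by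
    refine IsBigO.fun_sum fun l _ => ?_
    have hcomp : (fun t : ℂ => err (((l : ℂ) + h - 1) * t))
        =O[nhds (0 : ℂ)] fun t => ‖((l : ℂ) + h - 1) * t‖ ^ (n + 1) := by
      refine hO.comp_tendsto ?_
      have hc : Continuous fun t : ℂ => ((l : ℂ) + h - 1) * t := continuous_const.mul continuous_id
      simpa using hc.tendsto 0
    have hbound : (fun t : ℂ => ‖((l : ℂ) + h - 1) * t‖ ^ (n + 1))
        =O[nhds (0 : ℂ)] fun t => ‖t‖ ^ (n + 1) := by
      apply IsBigO.of_bound (‖(l : ℂ) + h - 1‖ ^ (n + 1))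
      refine Eventually.of_forall fun t => ?_
      have he : ‖((l : ℂ) + h - 1) * t‖ ^ (n + 1)
          = ‖(l : ℂ) + h - 1‖ ^ (n + 1) * ‖t‖ ^ (n + 1) := by
        rw [norm_mul, mul_pow]
      rw [Real.norm_eq_abs, _root_.abs_of_nonneg (by positivity), he, Real.norm_eq_abs,
        _root_.abs_of_nonneg (by positivity)]
    exact (hcomp.trans hbound).const_mul_left _
  obtain ⟨C, hC⟩ := hEO.bound
  have hcast : Tendsto (fun t : ℝ => (t : ℂ)) (nhdsWithin 0 (Set.Iio (0 : ℝ))) (nhds 0) := by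
    have hc := Complex.continuous_ofReal.tendsto (0 : ℝ)
    simpa using hc.mono_left nhdsWithin_le_nhds
  have hCev : ∀ᶠ t : ℝ in nhdsWithin 0 (Set.Iio (0 : ℝ)),
      ‖∑ l ∈ range (n + 1), (-1 : ℂ) ^ l * (n.choose l : ℂ) * err (((l : ℂ) + h - 1) * (t : ℂ))‖
        ≤ C * |t| ^ (n + 1) := by
    filter_upwards [hcast.eventually hC] with t ht
    calc ‖∑ l ∈ range (n + 1), (-1 : ℂ) ^ l * (n.choose l : ℂ) * err (((l : ℂ) + h - 1) * (t : ℂ))‖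
        ≤ C * ‖‖(t : ℂ)‖ ^ (n + 1)‖ := ht
      _ = C * |t| ^ (n + 1) := by
          rw [Real.norm_eq_abs, _root_.abs_of_nonneg (by positivity), Complex.norm_real,
            Real.norm_eq_abs]
  have hE0 : Tendsto (fun t : ℝ =>
      (∑ l ∈ range (n + 1), (-1 : ℂ) ^ l * (n.choose l : ℂ) * err (((l : ℂ) + h - 1) * (t : ℂ)))
        / (-(t : ℂ)) ^ n) (nhdsWithin 0 (Set.Iio (0 : ℝ))) (nhds 0) := by
    apply squeeze_zero_norm' (a := fun t : ℝ => C * |t|)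
    · filter_upwards [hCev, self_mem_nhdsWithin] with t hle ht
      have ht0 : t ≠ 0 := ne_of_lt ht
      have habs : (0 : ℝ) < |t| := abs_pos.mpr ht0
      have hnorm : ‖(∑ l ∈ range (n + 1),
          (-1 : ℂ) ^ l * (n.choose l : ℂ) * err (((l : ℂ) + h - 1) * (t : ℂ))) / (-(t : ℂ)) ^ n‖
          = ‖∑ l ∈ range (n + 1),
            (-1 : ℂ) ^ l * (n.choose l : ℂ) * err (((l : ℂ) + h - 1) * (t : ℂ))‖ / |t| ^ n := by
        rw [norm_div, norm_pow, norm_neg, Complex.norm_real, Real.norm_eq_abs]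
      rw [hnorm, div_le_iff₀ (by positivity)]
      calc ‖∑ l ∈ range (n + 1), (-1 : ℂ) ^ l * (n.choose l : ℂ) * err (((l : ℂ) + h - 1) * (t : ℂ))‖
          ≤ C * |t| ^ (n + 1) := hle
        _ = C * |t| * |t| ^ n := by ring
    · have hc : Tendsto (fun t : ℝ => C * |t|) (nhds 0) (nhds (C * |(0 : ℝ)|)) :=
        (continuous_const.mul _root_.continuous_abs).tendsto 0
      simp only [abs_zero, mul_zero] at hc
      exact hc.mono_left nhdsWithin_le_nhds
  have hteq : ∀ᶠ t : ℝ in nhdsWithin 0 (Set.Iio (0 : ℝ)),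
      QBBx x n + (∑ l ∈ range (n + 1),
          (-1 : ℂ) ^ l * (n.choose l : ℂ) * err (((l : ℂ) + h - 1) * (t : ℂ))) / (-(t : ℂ)) ^ n
      = (∑ l ∈ range (n + 1),
          (-1 : ℂ) ^ l * (n.choose l : ℂ) * QBB x (((l : ℂ) + h - 1) * (t : ℂ))) / (-(t : ℂ)) ^ n := by
    filter_upwards [self_mem_nhdsWithin] with t ht
    have ht0 : (t : ℂ) ≠ 0 := by
      simp only [ne_eq, Complex.ofReal_eq_zero]
      exact ne_of_lt ht
    have hne : (-(t : ℂ)) ^ n ≠ 0 := pow_ne_zero _ (neg_ne_zero.mpr ht0)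
    rw [hdecomp ((t : ℂ))]
    rw [neg_pow]
    field_simp
    ring_nf
    congr 1
    refine Finset.sum_congr rfl fun l _ => ?_
    ring_nf
  have hfinal : Tendsto (fun t : ℝ => QBBx x n +
      (∑ l ∈ range (n + 1), (-1 : ℂ) ^ l * (n.choose l : ℂ) * err (((l : ℂ) + h - 1) * (t : ℂ)))
        / (-(t : ℂ)) ^ n)
      (nhdsWithin 0 (Set.Iio (0 : ℝ))) (nhds (QBBx x n + 0)) :=
    Tendsto.add tendsto_const_nhds hE0
  rw [add_zero] at hfinal
  exact Filter.Tendsto.congr' hteq hfinal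

/-- as `q → 1⁻` (along `0 < q < 1`), the `(h,q)`-Bernoulli polynomial
`β_{n,q}^h(x)` tends to the ordinary Bernoulli polynomial `B_n(x)`. -/
theorem qbeta_tendsto_bernoulli (h : ℂ) (hh : 1 < h.re) (n : ℕ) (x : ℝ) :
    Filter.Tendsto (fun q : ℝ => qbeta q h n x)
      (nhdsWithin 1 (Set.Ioo (0 : ℝ) 1))
      (nhds (Polynomial.eval (x : ℂ)
        (Polynomial.map (algebraMap ℚ ℂ) (Polynomial.bernoulli n)))) := by
  have hpsi := QBPsi_tendsto x h n
  set A : ℝ → ℂ := fun q => ((q : ℂ) - 1) / ((Real.log q : ℝ) : ℂ) with hA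
  -- log tends to 0 from below
  have hlogR : Tendsto Real.log (nhdsWithin 1 (Set.Ioo (0 : ℝ) 1))
      (nhdsWithin 0 (Set.Iio (0 : ℝ))) := by
    rw [tendsto_nhdsWithin_iff]
    constructor
    · have hc : Tendsto Real.log (nhds 1) (nhds (Real.log 1)) :=
        (Real.continuousAt_log one_ne_zero)
      rw [Real.log_one] at hc
      exact hc.mono_left nhdsWithin_le_nhds
    · filter_upwards [self_mem_nhdsWithin] with q hq
      exact Real.log_neg hq.1 hq.2
  -- A tends to 1
  have hAt : Tendsto A (nhdsWithin 1 (Set.Ioo (0 : ℝ) 1)) (nhds 1) := by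
    have hd : HasDerivAt Real.log 1 1 := by
      simpa using Real.hasDerivAt_log one_ne_zero
    have hslope : Tendsto (slope Real.log 1) (nhdsWithin 1 {(1 : ℝ)}ᶜ) (nhds 1) :=
      hasDerivAt_iff_tendsto_slope.mp hd
    have hslope' : Tendsto (slope Real.log 1) (nhdsWithin 1 (Set.Ioo (0 : ℝ) 1)) (nhds 1) :=
      hslope.mono_left (nhdsWithin_mono 1 (fun q hq => ne_of_lt hq.2))
    have hinv : Tendsto (fun q => (slope Real.log 1 q)⁻¹)
        (nhdsWithin 1 (Set.Ioo (0 : ℝ) 1)) (nhds 1) := by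
      have h2 := hslope'.inv₀ one_ne_zero
      simpa using h2
    have hcast : Tendsto (fun q => (((slope Real.log 1 q)⁻¹ : ℝ) : ℂ))
        (nhdsWithin 1 (Set.Ioo (0 : ℝ) 1)) (nhds 1) := by
      have h3 := (Complex.continuous_ofReal.tendsto 1).comp hinv
      rw [Complex.ofReal_one] at h3
      exact h3.congr fun q => rfl
    refine hcast.congr' ?_
    filter_upwards [self_mem_nhdsWithin] with q hq
    rw [slope_def_field]
    rw [Real.log_one]
    push_cast
    rw [inv_div, sub_zero]
  have hAne1 : Tendsto (fun q => ((A q) ^ n)⁻¹ * A q)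
      (nhdsWithin 1 (Set.Ioo (0 : ℝ) 1)) (nhds 1) := by
    have h1 : Tendsto (fun q => ((A q) ^ n)⁻¹)
        (nhdsWithin 1 (Set.Ioo (0 : ℝ) 1)) (nhds ((1 ^ n : ℂ))⁻¹) := (hAt.pow n).inv₀ (by simp)
    have h2 := h1.mul hAt
    simpa using h2
  have hfac2 : Tendsto (fun q : ℝ => Complex.exp ((x : ℂ) * (1 - h) * (Real.log q : ℂ)))
      (nhdsWithin 1 (Set.Ioo (0 : ℝ) 1)) (nhds 1) := by
    have hlc : Tendsto (fun q : ℝ => ((Real.log q : ℝ) : ℂ))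
        (nhdsWithin 1 (Set.Ioo (0 : ℝ) 1)) (nhds 0) := by
      have h4 := (Complex.continuous_ofReal.tendsto 0).comp
        (hlogR.mono_right nhdsWithin_le_nhds)
      simpa [Function.comp_def] using h4
    have harg : Tendsto (fun q : ℝ => (x : ℂ) * (1 - h) * (Real.log q : ℂ))
        (nhdsWithin 1 (Set.Ioo (0 : ℝ) 1)) (nhds 0) := by
      have h5 := tendsto_const_nhds (x := ((x : ℂ) * (1 - h))) |>.mul hlc
      simpa using h5
    have h6 := (Complex.continuous_exp.tendsto 0).comp harg
    simpa [Complex.exp_zero, Function.comp_def] using h6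
  have hfac3 : Tendsto (fun q : ℝ => (∑ l ∈ range (n + 1),
      (-1 : ℂ) ^ l * (n.choose l : ℂ) * QBB x (((l : ℂ) + h - 1) * (Real.log q : ℂ)))
        / (-(Real.log q : ℂ)) ^ n)
      (nhdsWithin 1 (Set.Ioo (0 : ℝ) 1)) (nhds (QBBx x n)) := hpsi.comp hlogR
  have hG : Tendsto (fun q : ℝ => (((A q) ^ n)⁻¹ * A q)
      * Complex.exp ((x : ℂ) * (1 - h) * (Real.log q : ℂ))
      * ((∑ l ∈ range (n + 1),
          (-1 : ℂ) ^ l * (n.choose l : ℂ) * QBB x (((l : ℂ) + h - 1) * (Real.log q : ℂ)))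
            / (-(Real.log q : ℂ)) ^ n))
      (nhdsWithin 1 (Set.Ioo (0 : ℝ) 1)) (nhds (QBBx x n)) := by
    have h7 := (hAne1.mul hfac2).mul hfac3
    simpa using h7
  refine Filter.Tendsto.congr' ?_ hG
  -- pointwise identity on Ioo 0 1
  filter_upwards [self_mem_nhdsWithin] with q hq
  obtain ⟨hq0, hq1⟩ := hq
  set s : ℂ := ((Real.log q : ℝ) : ℂ) with hs
  have hslt : Real.log q < 0 := Real.log_neg hq0 hq1
  have hsne : s ≠ 0 := by
    rw [hs]
    simp only [ne_eq, Complex.ofReal_eq_zero]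
    exact ne_of_lt hslt
  have h1q : (1 : ℂ) - (q : ℂ) ≠ 0 := by
    rw [sub_ne_zero]
    intro habs
    have : (q : ℝ) = 1 := by exact_mod_cast habs.symm
    exact absurd this (ne_of_lt hq1)
  have hAq : A q = ((q : ℂ) - 1) / s := rfl
  have hAqne : A q ≠ 0 := div_ne_zero (fun habs => h1q (by linear_combination -habs)) hsne
  have hterm : ∀ l ∈ range (n + 1),
      (n.choose l : ℂ) * (-1) ^ l * qcpow q ((l : ℂ) * (x : ℂ)) *
        (((l : ℂ) + h - 1) / qnum q ((l : ℂ) + h - 1))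
      = (A q * Complex.exp ((x : ℂ) * (1 - h) * s)) *
          ((-1 : ℂ) ^ l * (n.choose l : ℂ) * QBB x (((l : ℂ) + h - 1) * s)) := by
    intro l _
    set w : ℂ := (l : ℂ) + h - 1 with hw
    have hwre : 0 < w.re := by
      rw [hw]
      simp only [Complex.sub_re, Complex.add_re, Complex.natCast_re, Complex.one_re]
      have : (0 : ℝ) ≤ (l : ℝ) := Nat.cast_nonneg l
      linarith
    have hwne : w ≠ 0 := by
      intro habs
      rw [habs] at hwre
      simp at hwre
    have hws_ne : w * s ≠ 0 := mul_ne_zero hwne hsne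
    have hwsre : (w * s).re = w.re * Real.log q := by
      rw [hs]
      simp [Complex.mul_re]
    have hexpne : Complex.exp (w * s) ≠ 1 := by
      intro habs
      have habs2 : ‖Complex.exp (w * s)‖ = 1 := by rw [habs]; simp
      rw [Complex.norm_exp, hwsre] at habs2
      rw [← Real.exp_zero] at habs2
      have h8 := Real.exp_eq_exp.mp habs2
      have h9 : w.re * Real.log q < 0 := mul_neg_of_pos_of_neg hwre hslt
      rw [h8] at h9
      exact lt_irrefl 0 h9
    have hEne : QBE (w * s) ≠ 0 := QBE_ne_zero hws_ne hexpne
    have hqnum : qnum q w = -(w * s * QBE (w * s)) / (1 - (q : ℂ)) := by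
      rw [qnum, qcpow]
      rw [show w * ((Real.log q : ℝ) : ℂ) = w * s from rfl]
      rw [show (1 : ℂ) - Complex.exp (w * s) = -(w * s * QBE (w * s)) from by
        rw [QBE_mul]; ring]
    have hsplitexp : Complex.exp (((l : ℂ) * (x : ℂ)) * s)
        = Complex.exp ((x : ℂ) * (1 - h) * s) * Complex.exp ((x : ℂ) * (w * s)) := by
      rw [← Complex.exp_add]
      congr 1
      rw [hw]
      ring
    rw [qcpow]
    rw [show ((l : ℂ) * (x : ℂ)) * ((Real.log q : ℝ) : ℂ) = ((l : ℂ) * (x : ℂ)) * s from rfl]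
    rw [hsplitexp, hqnum, QBB, hAq]
    field_simp
    ring
  rw [qbeta, Finset.sum_congr rfl hterm, ← Finset.mul_sum]
  have h1qA : (1 : ℂ) - (q : ℂ) = -(A q * s) := by
    rw [hAq]
    field_simp
    ring
  rw [h1qA]
  have hApow : (-(A q * s))⁻¹ ^ n = ((A q) ^ n)⁻¹ * ((-s) ^ n)⁻¹ := by
    rw [show -(A q * s) = A q * (-s) from by ring, mul_inv, mul_pow, inv_pow, inv_pow]
  rw [hApow]
  rw [div_eq_mul_inv]
  ring
end

section
/- For every real x > 0, every h ∈ ℂ with Re(h) > 1, and every t ∈ ℂ, the generating function of the (h,q)-Bernoulli polynomials satisfies the difference equation F_q(t, x | h) = exp([x]_q·t) · F_q(q^x·t | h); explicitly, −t · Σ_{n=0}^{∞} q^{hn+x}·exp([x+n]_q·t) + (h−1)(1−q) · Σ_{n=0}^{∞} q^{(h−1)n}·exp([x+n]_q·t) = exp([x]_q·t) · ( −q^x·t · Σ_{n=0}^{∞} q^{hn}·exp([n]_q·q^x·t) + (h−1)(1−q) · Σ_{n=0}^{∞} q^{(h−1)n}·exp([n]_q·q^x·t) ), all series converging absolutely.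 -/
open Complex Finset Filter

lemma qcpow_real (q x : ℝ) : qcpow q (x : ℂ) = ((Real.exp (x * Real.log q) : ℝ) : ℂ) := by
  rw [qcpow, Complex.ofReal_exp]; congr 1; push_cast; ring

lemma qnumR_abs_le (q : ℝ) (hq0 : 0 < q) (hq1 : q < 1) (y : ℝ) (hy : 0 ≤ y) :
    |qnumR q y| ≤ 1 / (1 - q) := by
  have hlq : Real.log q < 0 := Real.log_neg hq0 hq1
  have h1 : Real.exp (y * Real.log q) ≤ 1 := by
    rw [Real.exp_le_one_iff]
    exact mul_nonpos_of_nonneg_of_nonpos hy hlq.le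
  have h2 : (0:ℝ) < Real.exp (y * Real.log q) := Real.exp_pos _
  have hq : (0:ℝ) < 1 - q := by linarith
  rw [qnumR, abs_div, abs_of_pos hq, _root_.abs_of_nonneg (by linarith)]
  gcongr
  linarith

lemma norm_exp_qnumR_le (q : ℝ) (hq0 : 0 < q) (hq1 : q < 1) (y : ℝ) (hy : 0 ≤ y) (t : ℂ) :
    ‖Complex.exp ((qnumR q y : ℂ) * t)‖ ≤ Real.exp (1 / (1 - q) * ‖t‖) := by
  rw [Complex.norm_exp]
  apply Real.exp_le_exp.mpr
  calc ((qnumR q y : ℂ) * t).re ≤ ‖(qnumR q y : ℂ) * t‖ := Complex.re_le_norm _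
    _ = |qnumR q y| * ‖t‖ := by
        rw [norm_mul]; congr 1; rw [Complex.norm_real, Real.norm_eq_abs]
    _ ≤ 1 / (1 - q) * ‖t‖ :=
        mul_le_mul_of_nonneg_right (qnumR_abs_le q hq0 hq1 y hy) (norm_nonneg t)

lemma summable_aux (q : ℝ) (hq0 : 0 < q) (hq1 : q < 1) (a : ℂ) (ha : 0 < a.re)
    (f : ℕ → ℂ) (C : ℝ) (hf : ∀ n, ‖f n‖ ≤ C) :
    Summable (fun n : ℕ => qcpow q (a * (n : ℂ)) * f n) := by
  apply Summable.of_norm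
  set r := Real.exp (a.re * Real.log q) with hr
  have hr0 : 0 ≤ r := (Real.exp_pos _).le
  have hr1 : r < 1 := by
    rw [hr, Real.exp_lt_one_iff]
    exact mul_neg_of_pos_of_neg ha (Real.log_neg hq0 hq1)
  apply Summable.of_nonneg_of_le (fun n => norm_nonneg _) (fun n => ?_)
    ((summable_geometric_of_lt_one hr0 hr1).mul_right C)
  rw [norm_mul, norm_qcpow]
  have : (a * (n : ℂ)).re * Real.log q = (n : ℝ) * (a.re * Real.log q) := by
    simp [Complex.mul_re]; ring
  rw [this, Real.exp_nat_mul]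
  exact mul_le_mul_of_nonneg_left (hf n) (pow_nonneg hr0 n)

/-- the difference equation `F_q(t, x | h) = e^{[x]_q t} F_q(q^x t | h)`
for the generating function of the `(h,q)`-Bernoulli polynomials,
with all series converging absolutely. -/
theorem Fq_difference_equation (q : ℝ) (hq0 : 0 < q) (hq1 : q < 1)
    (h : ℂ) (hh : 1 < h.re) (x : ℝ) (hx : 0 < x) (t : ℂ) :
    Summable (fun n : ℕ => qcpow q (h * (n : ℂ) + (x : ℂ)) *
      Complex.exp ((qnumR q (x + n) : ℂ) * t)) ∧
    Summable (fun n : ℕ => qcpow q ((h - 1) * (n : ℂ)) *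
      Complex.exp ((qnumR q (x + n) : ℂ) * t)) ∧
    Summable (fun n : ℕ => qcpow q (h * (n : ℂ)) *
      Complex.exp ((qnumR q (n : ℝ) : ℂ) * (qcpow q (x : ℂ) * t))) ∧
    Summable (fun n : ℕ => qcpow q ((h - 1) * (n : ℂ)) *
      Complex.exp ((qnumR q (n : ℝ) : ℂ) * (qcpow q (x : ℂ) * t))) ∧
    (-t * ∑' n : ℕ, qcpow q (h * (n : ℂ) + (x : ℂ)) *
        Complex.exp ((qnumR q (x + n) : ℂ) * t)) +
      (h - 1) * (1 - (q : ℂ)) *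
        (∑' n : ℕ, qcpow q ((h - 1) * (n : ℂ)) *
          Complex.exp ((qnumR q (x + n) : ℂ) * t)) =
      Complex.exp ((qnumR q x : ℂ) * t) *
        ((-(qcpow q (x : ℂ) * t) * ∑' n : ℕ, qcpow q (h * (n : ℂ)) *
            Complex.exp ((qnumR q (n : ℝ) : ℂ) * (qcpow q (x : ℂ) * t))) +
          (h - 1) * (1 - (q : ℂ)) *
            ∑' n : ℕ, qcpow q ((h - 1) * (n : ℂ)) *
              Complex.exp ((qnumR q (n : ℝ) : ℂ) * (qcpow q (x : ℂ) * t))) := by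
  have hh0 : 0 < h.re := by linarith
  have hh1 : 0 < (h - 1).re := by
    simp only [Complex.sub_re, Complex.one_re]; linarith
  have hne : (1 - q) ≠ 0 := by linarith
  set A : ℂ := qcpow q (x : ℂ) with hA
  -- summability
  have C1 := fun n : ℕ =>
    norm_exp_qnumR_le q hq0 hq1 (x + n) (by positivity) t
  have C2 := fun n : ℕ =>
    norm_exp_qnumR_le q hq0 hq1 (n : ℝ) n.cast_nonneg (A * t)
  have Sb : Summable (fun n : ℕ => qcpow q (h * (n : ℂ)) *
      Complex.exp ((qnumR q (x + n) : ℂ) * t)) :=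
    summable_aux q hq0 hq1 h hh0 _ _ C1
  have S1 : Summable (fun n : ℕ => qcpow q (h * (n : ℂ) + (x : ℂ)) *
      Complex.exp ((qnumR q (x + n) : ℂ) * t)) := by
    refine (Sb.mul_left A).congr fun n => ?_
    rw [qcpow_add]; ring
  have S2 : Summable (fun n : ℕ => qcpow q ((h - 1) * (n : ℂ)) *
      Complex.exp ((qnumR q (x + n) : ℂ) * t)) :=
    summable_aux q hq0 hq1 (h - 1) hh1 _ _ C1
  have S3 : Summable (fun n : ℕ => qcpow q (h * (n : ℂ)) *
      Complex.exp ((qnumR q (n : ℝ) : ℂ) * (A * t))) :=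
    summable_aux q hq0 hq1 h hh0 _ _ C2
  have S4 : Summable (fun n : ℕ => qcpow q ((h - 1) * (n : ℂ)) *
      Complex.exp ((qnumR q (n : ℝ) : ℂ) * (A * t))) :=
    summable_aux q hq0 hq1 (h - 1) hh1 _ _ C2
  refine ⟨S1, S2, S3, S4, ?_⟩
  -- key exponent identity
  have key : ∀ n : ℕ, ((qnumR q (x + n) : ℝ) : ℂ) * t =
      (qnumR q x : ℂ) * t + (qnumR q (n : ℝ) : ℂ) * (A * t) := by
    intro n
    have hr : qnumR q (x + n) =
        qnumR q x + Real.exp (x * Real.log q) * qnumR q (n : ℝ) := by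
      rw [qnumR, qnumR, qnumR]
      field_simp
      rw [add_mul, Real.exp_add]; ring
    rw [hr, hA, qcpow_real]; push_cast; ring
  have e1 : ∀ n : ℕ, qcpow q (h * (n : ℂ) + (x : ℂ)) *
      Complex.exp ((qnumR q (x + n) : ℂ) * t) =
      (A * Complex.exp ((qnumR q x : ℂ) * t)) *
        (qcpow q (h * (n : ℂ)) * Complex.exp ((qnumR q (n : ℝ) : ℂ) * (A * t))) := by
    intro n
    rw [qcpow_add, key n, Complex.exp_add]; ring
  have e2 : ∀ n : ℕ, qcpow q ((h - 1) * (n : ℂ)) *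
      Complex.exp ((qnumR q (x + n) : ℂ) * t) =
      Complex.exp ((qnumR q x : ℂ) * t) *
        (qcpow q ((h - 1) * (n : ℂ)) *
          Complex.exp ((qnumR q (n : ℝ) : ℂ) * (A * t))) := by
    intro n
    rw [key n, Complex.exp_add]; ring
  rw [tsum_congr e1, tsum_congr e2, tsum_mul_left, tsum_mul_left]
  ring
end
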